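/- arXiv:1908.11467 — 5 statements merged into one kernel-verified Lean document; each statement's English description precedes it below -/
import Mathlib

section
/- Fix n ∈ ℕ, b > 0, and γ_1, γ_2 ∈ ℝ with 0 < |γ_1 − γ_2| < 1. For j ∈ {1,2} let j' denote the other index and define W_j(m) = b^m / (m! · Γ(m + γ_j − γ_{j'} + 1)) for m ∈ ℕ, and define P : ℝ → ℝ by P(x) = Σ_{j=0}^{n} (−1)^j C(n,j) b^(−j) · Π_{i=0}^{j−1} [(x − γ_1 − i)(x − γ_2 − i)]. Then: (i) W_j(m) > 0 for all m ∈ ℕ and j ∈ {1,2}; (ii) P is the evaluation of a real polynomial of degree exactly 2n; (iii) for every j ∈ {1,2} and every natural number k < n, the series Σ_{m=0}^{∞} P(γ_j + m) · (γ_j + m)^k · W_j(m) converges and has sum 0. -/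
open Finset Polynomial


lemma gamma_shift (t : ℝ) (ht : 0 < t) (m : ℕ) :
    Real.Gamma (t + m) = (∏ i ∈ range m, (t + i)) * Real.Gamma t := by
  induction m with
  | zero => simp
  | succ m ih =>
    have h1 : t + ((m+1 : ℕ) : ℝ) = (t + m) + 1 := by push_cast; ring
    have h2 : (0:ℝ) < t + m := by positivity
    rw [h1, Real.Gamma_add_one h2.ne', ih, prod_range_succ]
    ring

lemma pascal_sum (n : ℕ) (f : ℕ → ℝ) :
    ∑ l ∈ range (n+2), (-1:ℝ)^l * ((n+1).choose l) * f l
      = ∑ l ∈ range (n+1), (-1:ℝ)^l * (n.choose l) * (f l - f (l+1)) := by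
  calc ∑ l ∈ range (n+2), (-1:ℝ)^l * ((n+1).choose l) * f l
      = (∑ l ∈ range (n+1), (-1:ℝ)^(l+1) * ((n+1).choose (l+1)) * f (l+1))
          + (-1:ℝ)^0 * ((n+1).choose 0) * f 0 := Finset.sum_range_succ' _ (n+1)
    _ = (∑ l ∈ range (n+1), ((-1:ℝ)^(l+1) * (n.choose (l+1)) * f (l+1)
          - (-1:ℝ)^l * (n.choose l) * f (l+1))) + f 0 := by
        refine congrArg₂ _ (Finset.sum_congr rfl fun l _ => ?_) (by norm_num)
        have hc : (((n+1).choose (l+1) : ℕ) : ℝ) = (n.choose l : ℝ) + (n.choose (l+1) : ℝ) := by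
          exact_mod_cast Nat.choose_succ_succ n l
        rw [hc]; ring
    _ = ((∑ l ∈ range (n+1), (-1:ℝ)^(l+1) * (n.choose (l+1)) * f (l+1)) + f 0)
          - ∑ l ∈ range (n+1), (-1:ℝ)^l * (n.choose l) * f (l+1) := by
        rw [Finset.sum_sub_distrib]; ring
    _ = (∑ l ∈ range (n+2), (-1:ℝ)^l * (n.choose l) * f l)
          - ∑ l ∈ range (n+1), (-1:ℝ)^l * (n.choose l) * f (l+1) := by
        rw [Finset.sum_range_succ' (fun l => (-1:ℝ)^l * (n.choose l) * f l) (n+1)]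
        norm_num
    _ = (∑ l ∈ range (n+1), (-1:ℝ)^l * (n.choose l) * f l)
          - ∑ l ∈ range (n+1), (-1:ℝ)^l * (n.choose l) * f (l+1) := by
        rw [Finset.sum_range_succ]; simp [Nat.choose_succ_self]
    _ = ∑ l ∈ range (n+1), (-1:ℝ)^l * (n.choose l) * (f l - f (l+1)) := by
        rw [← Finset.sum_sub_distrib]; exact Finset.sum_congr rfl fun l _ => by ring

lemma findiff (n : ℕ) : ∀ (q : Polynomial ℝ), q.degree < n → ∀ x : ℝ,
    ∑ l ∈ range (n+1), (-1:ℝ)^l * (n.choose l) * q.eval (x + l) = 0 := by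
  induction n with
  | zero =>
    intro q hq x
    have hbot : q.degree = ⊥ := Nat.WithBot.lt_zero_iff.mp (by exact_mod_cast hq)
    have : q = 0 := Polynomial.degree_eq_bot.mp hbot
    simp [this]
  | succ n ih =>
    intro q hq x
    set r := q - q.comp (X + C 1) with hrdef
    have hre : ∀ y : ℝ, r.eval y = q.eval y - q.eval (y + 1) := by
      intro y; simp [hrdef, Polynomial.eval_comp]
    have hrd : r.degree < n := by
      rcases eq_or_ne q 0 with h0 | h0
      · simp [hrdef, h0]
      · have hlc : (q.comp (X + C (1:ℝ))).leadingCoeff = q.leadingCoeff := by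
          rw [Polynomial.leadingCoeff_comp (by rw [Polynomial.natDegree_X_add_C]; norm_num)]
          rw [Polynomial.leadingCoeff_X_add_C, one_pow, mul_one]
        have hcne : q.comp (X + C (1:ℝ)) ≠ 0 := by
          intro h
          exact h0 (Polynomial.leadingCoeff_eq_zero.mp (by rw [← hlc, h, leadingCoeff_zero]))
        have hdeg : q.degree = (q.comp (X + C (1:ℝ))).degree := by
          rw [Polynomial.degree_eq_natDegree h0, Polynomial.degree_eq_natDegree hcne]
          rw [Polynomial.natDegree_comp, Polynomial.natDegree_X_add_C, mul_one]
        have hlt := Polynomial.degree_sub_lt hdeg h0 hlc.symm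
        have hqn : q.degree ≤ (n : WithBot ℕ) := by
          rw [Polynomial.degree_eq_natDegree h0] at hq ⊢
          exact_mod_cast Nat.lt_succ_iff.mp (by exact_mod_cast hq)
        exact lt_of_lt_of_le hlt hqn
    have key := pascal_sum n (fun l => q.eval (x + l))
    rw [show n + 1 + 1 = n + 2 from rfl, key]
    rw [← ih r hrd x]
    refine Finset.sum_congr rfl fun l _ => ?_
    have hcast : x + ((l+1:ℕ):ℝ) = (x + l) + 1 := by push_cast; ring
    rw [hre, hcast]

lemma summable_aux (k : ℕ) (r : ℝ) (hr : 0 < r) :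
    Summable (fun m : ℕ => (1 + m : ℝ)^k * r^m / m.factorial) := by
  apply summable_of_ratio_norm_eventually_le (r := 1/2) (by norm_num)
  filter_upwards [Filter.eventually_ge_atTop (Nat.ceil (2^(k+1) * r))] with m hm
  have hm' : 2^(k+1) * r ≤ (m:ℝ) + 1 := by
    have : (2^(k+1) * r : ℝ) ≤ m := by exact_mod_cast (Nat.ceil_le.mp hm)
    linarith
  have hfac : (0:ℝ) < m.factorial := by exact_mod_cast m.factorial_pos
  have hpos1 : (0:ℝ) < (1 + m)^k * r^m / m.factorial := by positivity
  have hpos2 : (0:ℝ) < (1 + ((m:ℕ)+1:ℕ) : ℝ)^k * r^(m+1) / (m+1).factorial := by positivity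
  rw [Real.norm_eq_abs, Real.norm_eq_abs, abs_of_pos hpos2, abs_of_pos hpos1]
  have e1 : (((m+1).factorial : ℕ) : ℝ) = ((m:ℝ)+1) * m.factorial := by
    rw [Nat.factorial_succ]; push_cast; ring
  have h2 : (1 + (((m:ℕ)+1:ℕ):ℝ))^k ≤ 2^k * (1+m)^k := by
    rw [← mul_pow]
    apply pow_le_pow_left₀ (by positivity)
    push_cast; linarith [Nat.cast_nonneg (α := ℝ) m]
  calc (1 + (((m:ℕ)+1:ℕ):ℝ))^k * r^(m+1) / (m+1).factorial
      = ((1 + (((m:ℕ)+1:ℕ):ℝ))^k * r / ((m:ℝ)+1)) * (r^m / m.factorial) := by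
        rw [e1, pow_succ]; field_simp
    _ ≤ ((2^k * (1+m)^k) * r / ((m:ℝ)+1)) * (r^m / m.factorial) := by
        have hb : (0:ℝ) < (m:ℝ)+1 := by positivity
        gcongr
    _ ≤ (1/2 * (1+m)^k) * (r^m / m.factorial) := by
        have hb : (0:ℝ) < (m:ℝ)+1 := by positivity
        have hrm : (0:ℝ) ≤ r^m / m.factorial := by positivity
        apply mul_le_mul_of_nonneg_right _ hrm
        rw [div_le_iff₀ hb]
        have hpk : (0:ℝ) ≤ (1+(m:ℝ))^k := by positivity
        have := mul_le_mul_of_nonneg_left hm' hpk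
        have e2 : (2:ℝ)^(k+1) = 2 * 2^k := by ring
        rw [e2] at this
        linarith
    _ = 1/2 * ((1+(m:ℝ))^k * r^m / m.factorial) := by ring

lemma summable_W (k : ℕ) (b δ a : ℝ) (hb : 0 < b) (hδ : -1 < δ) :
    Summable (fun m : ℕ => (a + m)^k * (b^m / (m.factorial * Real.Gamma ((m:ℝ) + δ + 1)))) := by
  have hδ1 : (0:ℝ) < δ + 1 := by linarith
  have hΓ : 0 < Real.Gamma (δ+1) := Real.Gamma_pos_of_pos hδ1
  apply Summable.of_norm
  refine Summable.of_nonneg_of_le (fun m => norm_nonneg _) (fun m => ?_)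
    (((summable_aux k (b/(δ+1)) (by positivity)).mul_left ((|a|+1)^k / Real.Gamma (δ+1))))
  have hmδ : (0:ℝ) < (m:ℝ) + δ + 1 := by
    have : (0:ℝ) ≤ m := Nat.cast_nonneg m
    linarith
  have hG : 0 < Real.Gamma ((m:ℝ) + δ + 1) := Real.Gamma_pos_of_pos hmδ
  have hfac : (0:ℝ) < m.factorial := by exact_mod_cast m.factorial_pos
  rw [norm_mul, norm_pow, Real.norm_eq_abs, Real.norm_eq_abs,
    abs_of_pos (div_pos (pow_pos hb m) (mul_pos hfac hG))]
  have h1 : |a + (m:ℝ)| ^ k ≤ ((|a|+1) * (1+m))^k := by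
    apply pow_le_pow_left₀ (abs_nonneg _)
    have h3 : |a + (m:ℝ)| ≤ |a| + m := by
      calc |a + (m:ℝ)| ≤ |a| + |(m:ℝ)| := abs_add_le a m
        _ = |a| + m := by rw [Nat.abs_cast]
    nlinarith [abs_nonneg a, Nat.cast_nonneg (α := ℝ) m]
  have hge : (δ+1)^m * Real.Gamma (δ+1) ≤ Real.Gamma ((m:ℝ)+δ+1) := by
    have hgs := gamma_shift (δ+1) hδ1 m
    have harg : (δ+1) + (m:ℝ) = (m:ℝ)+δ+1 := by ring
    rw [harg] at hgs
    rw [hgs]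
    apply mul_le_mul_of_nonneg_right _ hΓ.le
    calc (δ+1)^m = ∏ _i ∈ range m, (δ+1) := by rw [prod_const, card_range]
      _ ≤ ∏ i ∈ range m, (δ+1+i) :=
        Finset.prod_le_prod (fun i _ => hδ1.le) (fun i _ => by
          have : (0:ℝ) ≤ i := Nat.cast_nonneg i
          linarith)
  have h2 : b^m / (m.factorial * Real.Gamma ((m:ℝ)+δ+1))
      ≤ b^m / (m.factorial * ((δ+1)^m * Real.Gamma (δ+1))) := by
    have hYpos : (0:ℝ) < m.factorial * ((δ+1)^m * Real.Gamma (δ+1)) := by positivity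
    apply div_le_div_of_nonneg_left (pow_pos hb m).le hYpos
    exact mul_le_mul_of_nonneg_left hge hfac.le
  calc |a + (m:ℝ)|^k * (b^m / (m.factorial * Real.Gamma ((m:ℝ)+δ+1)))
      ≤ ((|a|+1)*(1+m))^k * (b^m / (m.factorial * ((δ+1)^m * Real.Gamma (δ+1)))) := by
        apply mul_le_mul h1 h2 (by positivity) (by positivity)
    _ = (|a|+1)^k / Real.Gamma (δ+1) * ((1+(m:ℝ))^k * (b/(δ+1))^m / m.factorial) := by
        rw [div_pow, mul_pow]
        field_simp
lemma main_hasSum (n k : ℕ) (hk : k < n) (b : ℝ) (hb : 0 < b) (γ γ' : ℝ)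
    (hδ : -1 < γ - γ') :
    HasSum (fun m : ℕ =>
      (∑ j ∈ range (n+1), (-1:ℝ)^j * (n.choose j) * b^(-(j:ℤ)) *
        ∏ i ∈ range j, ((γ + (m:ℝ) - γ - i) * (γ + (m:ℝ) - γ' - i))) * (γ + (m:ℝ))^k *
      (b^m / ((m.factorial : ℝ) * Real.Gamma ((m:ℝ) + γ - γ' + 1)))) 0 := by
  have hδ1 : (0:ℝ) < (γ - γ') + 1 := by linarith
  set W : ℕ → ℝ := fun m => b^m / ((m.factorial : ℝ) * Real.Gamma ((m:ℝ) + γ - γ' + 1)) with hWdef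
  have hArg : ∀ m : ℕ, (0:ℝ) < (m:ℝ) + γ - γ' + 1 := fun m => by
    have : (0:ℝ) ≤ m := Nat.cast_nonneg m
    linarith
  have hGpos : ∀ m : ℕ, 0 < Real.Gamma ((m:ℝ) + γ - γ' + 1) :=
    fun m => Real.Gamma_pos_of_pos (hArg m)
  have hfacpos : ∀ m : ℕ, (0:ℝ) < (m.factorial : ℝ) := fun m => by exact_mod_cast m.factorial_pos
  have hWpos : ∀ m, 0 < W m := fun m => div_pos (pow_pos hb m) (mul_pos (hfacpos m) (hGpos m))
  have hWsum : ∀ a : ℝ, Summable (fun m : ℕ => (a + m)^k * W m) := by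
    intro a
    have h := summable_W k b (γ - γ') a hb hδ
    refine h.congr fun m => ?_
    simp only [hWdef]
    rw [show (m:ℝ) + (γ - γ') + 1 = (m:ℝ) + γ - γ' + 1 from by ring]
  have hh : ∀ j : ℕ, Summable (fun m : ℕ => (γ + ((m + j : ℕ) : ℝ))^k * W m) := by
    intro j
    refine (hWsum (γ + j)).congr fun m => ?_
    push_cast
    ring_nf
  set g : ℕ → ℕ → ℝ :=
    fun j m => if j ≤ m then (-1:ℝ)^j * (n.choose j) * ((γ + (m:ℝ))^k * W (m - j)) else 0
    with hgdef
  have hgsum : ∀ j ∈ range (n+1), HasSum (g j)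
      ((-1:ℝ)^j * (n.choose j) * ∑' m : ℕ, (γ + ((m + j : ℕ) : ℝ))^k * W m) := by
    intro j _
    have h2 := ((hh j).hasSum.mul_left ((-1:ℝ)^j * (n.choose j)))
    have hfe : (fun m => g j (m + j))
        = (fun m : ℕ => (-1:ℝ)^j * (n.choose j) * ((γ + ((m + j:ℕ):ℝ))^k * W m)) := by
      funext m
      simp only [hgdef, if_pos (Nat.le_add_left j m)]
      rw [Nat.add_sub_cancel]
    have h1 : HasSum (fun m => g j (m + j))
        ((-1:ℝ)^j * (n.choose j) * ∑' m : ℕ, (γ + ((m + j:ℕ):ℝ))^k * W m) := by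
      rw [hfe]; exact h2
    have h3 := (hasSum_nat_add_iff (f := g j) j).mp h1
    have h4 : ∑ i ∈ range j, g j i = 0 :=
      Finset.sum_eq_zero fun i hi => by
        simp only [hgdef]
        exact if_neg (Nat.not_le.mpr (mem_range.mp hi))
    rw [h4, add_zero] at h3
    exact h3
  have htotal := hasSum_sum hgsum
  have hval : (∑ j ∈ range (n+1),
      (-1:ℝ)^j * (n.choose j) * ∑' m : ℕ, (γ + ((m + j:ℕ):ℝ))^k * W m) = 0 := by
    have hs1 : ∀ j ∈ range (n+1),
        Summable (fun m : ℕ => (-1:ℝ)^j * (n.choose j) * ((γ + ((m + j:ℕ):ℝ))^k * W m)) :=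
      fun j _ => (hh j).mul_left _
    have hzero : ∀ m : ℕ,
        ∑ j ∈ range (n+1), (-1:ℝ)^j * (n.choose j) * ((γ + ((m + j:ℕ):ℝ))^k * W m) = 0 := by
      intro m
      have hfd := findiff n (X^k) (by rw [Polynomial.degree_X_pow]; exact_mod_cast hk) (γ + m)
      simp only [Polynomial.eval_pow, Polynomial.eval_X] at hfd
      calc ∑ j ∈ range (n+1), (-1:ℝ)^j * (n.choose j) * ((γ + ((m + j:ℕ):ℝ))^k * W m)
          = (∑ j ∈ range (n+1), (-1:ℝ)^j * (n.choose j) * (γ + (m:ℝ) + (j:ℝ))^k) * W m := by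
            rw [Finset.sum_mul]
            refine Finset.sum_congr rfl fun j _ => ?_
            push_cast
            ring
        _ = 0 := by rw [hfd, zero_mul]
    calc ∑ j ∈ range (n+1), (-1:ℝ)^j * (n.choose j) * ∑' m : ℕ, (γ + ((m + j:ℕ):ℝ))^k * W m
        = ∑ j ∈ range (n+1), ∑' m : ℕ, (-1:ℝ)^j * (n.choose j) * ((γ + ((m + j:ℕ):ℝ))^k * W m) := by
          refine Finset.sum_congr rfl fun j _ => ?_
          rw [tsum_mul_left]
      _ = ∑' m : ℕ, ∑ j ∈ range (n+1), (-1:ℝ)^j * (n.choose j) * ((γ + ((m + j:ℕ):ℝ))^k * W m) :=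
          (Summable.tsum_finsetSum hs1).symm
      _ = 0 := (tsum_congr hzero).trans tsum_zero
  have hpoint : (fun m : ℕ =>
      (∑ j ∈ range (n+1), (-1:ℝ)^j * (n.choose j) * b^(-(j:ℤ)) *
        ∏ i ∈ range j, ((γ + (m:ℝ) - γ - i) * (γ + (m:ℝ) - γ' - i))) * (γ + (m:ℝ))^k *
      (b^m / ((m.factorial : ℝ) * Real.Gamma ((m:ℝ) + γ - γ' + 1))))
      = fun m => ∑ j ∈ range (n+1), g j m := by
    funext m
    rw [Finset.sum_mul, Finset.sum_mul]
    refine Finset.sum_congr rfl fun j _ => ?_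
    by_cases hjm : j ≤ m
    · have hcast : ((m - j : ℕ):ℝ) = (m:ℝ) - j := Nat.cast_sub hjm
      have hsplit : ∏ i ∈ range j, ((γ + (m:ℝ) - γ - i) * (γ + (m:ℝ) - γ' - i))
          = (∏ i ∈ range j, ((m:ℝ) - i)) * ∏ i ∈ range j, ((m:ℝ) + (γ - γ') - i) := by
        rw [← Finset.prod_mul_distrib]
        exact Finset.prod_congr rfl fun i _ => by ring
      have hprod1 : ∏ i ∈ range j, ((m:ℝ) - i) = (m.descFactorial j : ℝ) := by
        have hc : ∀ i ∈ range j, ((m - i : ℕ):ℝ) = (m:ℝ) - i :=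
          fun i hi => Nat.cast_sub ((mem_range.mp hi).le.trans hjm)
        calc ∏ i ∈ range j, ((m:ℝ) - i) = ∏ i ∈ range j, ((m - i : ℕ):ℝ) :=
              (Finset.prod_congr rfl hc).symm
          _ = ((∏ i ∈ range j, (m - i) : ℕ) : ℝ) := by rw [Nat.cast_prod]
          _ = (m.descFactorial j : ℝ) := by rw [← Nat.descFactorial_eq_prod_range]
      set t : ℝ := ((m - j : ℕ):ℝ) + (γ - γ') + 1 with htdef
      have ht : 0 < t := by
        have h5 : (0:ℝ) ≤ ((m - j : ℕ):ℝ) := Nat.cast_nonneg _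
        simp only [htdef]
        linarith
      have hΓt : 0 < Real.Gamma t := Real.Gamma_pos_of_pos ht
      have htj : t + (j:ℝ) = (m:ℝ) + (γ - γ') + 1 := by rw [htdef, hcast]; ring
      have hprod2 : ∏ i ∈ range j, ((m:ℝ) + (γ - γ') - i)
          = Real.Gamma ((m:ℝ) + (γ - γ') + 1) / Real.Gamma t := by
        have hgs := gamma_shift t ht j
        have hre2 : ∏ i ∈ range j, ((m:ℝ) + (γ - γ') - i) = ∏ i ∈ range j, (t + i) := by
          rw [← Finset.prod_range_reflect (fun i : ℕ => (m:ℝ) + (γ - γ') - i) j]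
          refine Finset.prod_congr rfl fun i hi => ?_
          have hij : i < j := mem_range.mp hi
          have hc2 : ((j - 1 - i : ℕ):ℝ) = (j:ℝ) - 1 - i := by
            have h1 : (j - 1 - i : ℕ) = j - (1 + i) := by omega
            rw [h1, Nat.cast_sub (by omega : 1 + i ≤ j)]
            push_cast
            ring
          rw [hc2, htdef, hcast]
          ring
        rw [hre2, eq_div_iff hΓt.ne', ← htj]
        exact hgs.symm
      have hW2 : W (m - j) = b^(m-j) / (((m-j).factorial : ℝ) * Real.Gamma t) := by
        simp only [hWdef, htdef]
        rw [show ((m-j:ℕ):ℝ) + γ - γ' + 1 = ((m-j:ℕ):ℝ) + (γ - γ') + 1 from by ring]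
      have hfacrel : (((m-j).factorial : ℝ)) * (m.descFactorial j : ℝ) = (m.factorial : ℝ) := by
        exact_mod_cast congrArg (Nat.cast : ℕ → ℝ) (Nat.factorial_mul_descFactorial hjm)
      have hD : (m.descFactorial j : ℝ) ≠ 0 := by
        intro h
        rw [h, mul_zero] at hfacrel
        exact (hfacpos m).ne' hfacrel.symm
      have hbm : b^(m-j) * b^j = b^m := by
        rw [← pow_add, Nat.sub_add_cancel hjm]
      have hzp : b^(-(j:ℤ)) = (b^j)⁻¹ := by
        rw [zpow_neg, zpow_natCast]
      have hG1 : Real.Gamma ((m:ℝ) + (γ - γ') + 1) ≠ 0 := by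
        have h6 := hGpos m
        rw [show (m:ℝ) + γ - γ' + 1 = (m:ℝ) + (γ-γ') + 1 from by ring] at h6
        exact h6.ne'
      simp only [hgdef]
      rw [if_pos hjm, hW2, hsplit, hprod1, hprod2, hzp]
      rw [show (b:ℝ)^m / ((m.factorial : ℝ) * Real.Gamma ((m:ℝ) + γ - γ' + 1))
            = b^(m-j) * b^j / ((((m-j).factorial : ℝ) * (m.descFactorial j : ℝ))
                * Real.Gamma ((m:ℝ) + (γ - γ') + 1)) from by
          rw [hbm, hfacrel, show (m:ℝ) + γ - γ' + 1 = (m:ℝ) + (γ-γ') + 1 from by ring]]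
      field_simp
    · have hmem : m ∈ range j := mem_range.mpr (Nat.not_le.mp hjm)
      have h0 : ∏ i ∈ range j, ((γ + (m:ℝ) - γ - i) * (γ + (m:ℝ) - γ' - i)) = 0 :=
        Finset.prod_eq_zero hmem
          (by rw [show γ + (m:ℝ) - γ - (m:ℝ) = 0 from by ring, zero_mul])
      simp only [hgdef]
      rw [if_neg hjm, h0]
      ring
  rw [hval] at htotal
  rw [hpoint]
  exact htotal

/-- The paper's Charlier–Charlier family: the weights `W_j` on the interlacing shifted
lattices `γ_j + ℤ₊` are positive, the Rodrigues polynomial `P` has degree exactly `2n`,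
and `P` is orthogonal to `x^k`, `k < n`, with respect to both discrete measures. -/
theorem stmt_8 (n : ℕ) (b : ℝ) (hb : 0 < b) (γ₁ γ₂ : ℝ)
    (hγ0 : 0 < |γ₁ - γ₂|) (hγ1 : |γ₁ - γ₂| < 1) (W₁ W₂ : ℕ → ℝ)
    (hW₁ : ∀ m : ℕ, W₁ m = b ^ m / ((m.factorial : ℝ) * Real.Gamma ((m : ℝ) + γ₁ - γ₂ + 1)))
    (hW₂ : ∀ m : ℕ, W₂ m = b ^ m / ((m.factorial : ℝ) * Real.Gamma ((m : ℝ) + γ₂ - γ₁ + 1)))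
    (P : ℝ → ℝ)
    (hP : ∀ x : ℝ, P x = ∑ j ∈ Finset.range (n + 1),
      (-1 : ℝ) ^ j * (n.choose j : ℝ) * b ^ (-(j : ℤ)) *
        ∏ i ∈ Finset.range j, ((x - γ₁ - (i : ℝ)) * (x - γ₂ - (i : ℝ)))) :
    (∀ m : ℕ, 0 < W₁ m ∧ 0 < W₂ m) ∧
    (∃ p : Polynomial ℝ, p.degree = (2 * n : ℕ) ∧ ∀ x : ℝ, P x = p.eval x) ∧
    (∀ k : ℕ, k < n →
      HasSum (fun m : ℕ => P (γ₁ + m) * (γ₁ + m) ^ k * W₁ m) 0 ∧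
      HasSum (fun m : ℕ => P (γ₂ + m) * (γ₂ + m) ^ k * W₂ m) 0) := by
  have habs := abs_lt.mp hγ1
  have hδ12 : -1 < γ₁ - γ₂ := habs.1
  have hδ21 : -1 < γ₂ - γ₁ := by linarith [habs.2]
  refine ⟨?_, ?_, ?_⟩
  · -- positivity of the weights
    intro m
    have h1 : (0:ℝ) < (m:ℝ) + γ₁ - γ₂ + 1 := by linarith [Nat.cast_nonneg (α := ℝ) m]
    have h2 : (0:ℝ) < (m:ℝ) + γ₂ - γ₁ + 1 := by linarith [Nat.cast_nonneg (α := ℝ) m]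
    have hfac : (0:ℝ) < (m.factorial : ℝ) := by exact_mod_cast m.factorial_pos
    constructor
    · rw [hW₁ m]
      exact div_pos (pow_pos hb m) (mul_pos hfac (Real.Gamma_pos_of_pos h1))
    · rw [hW₂ m]
      exact div_pos (pow_pos hb m) (mul_pos hfac (Real.Gamma_pos_of_pos h2))
  · -- the polynomial of degree 2n
    set M : ℕ → Polynomial ℝ :=
      fun j => ∏ i ∈ range j, ((X - C (γ₁ + i)) * (X - C (γ₂ + i))) with hM
    have hMmonic : ∀ j, (M j).Monic := fun j =>
      monic_prod_of_monic _ _ fun i _ => (monic_X_sub_C _).mul (monic_X_sub_C _)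
    have hMdeg : ∀ j, (M j).natDegree = 2*j := by
      intro j
      simp only [hM]
      rw [Polynomial.natDegree_prod _ _
        (fun i _ => mul_ne_zero (X_sub_C_ne_zero _) (X_sub_C_ne_zero _))]
      have h3 : ∀ i ∈ range j, ((X - C (γ₁ + (i:ℝ))) * (X - C (γ₂ + (i:ℝ)))).natDegree = 2 := by
        intro i _
        rw [Polynomial.natDegree_mul (X_sub_C_ne_zero _) (X_sub_C_ne_zero _),
          natDegree_X_sub_C, natDegree_X_sub_C]
      rw [Finset.sum_congr rfl h3, Finset.sum_const, card_range, smul_eq_mul, mul_comm]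
    set p : Polynomial ℝ :=
      ∑ j ∈ range (n+1), C ((-1:ℝ)^j * (n.choose j) * b^(-(j:ℤ))) * M j with hp
    refine ⟨p, ?_, ?_⟩
    · have hle : p.degree ≤ ((2*n : ℕ) : WithBot ℕ) := by
        simp only [hp]
        refine (Polynomial.degree_sum_le _ _).trans ?_
        refine Finset.sup_le fun j hj => ?_
        refine (Polynomial.degree_mul_le _ _).trans ?_
        have h2 : (M j).degree ≤ ((2*n : ℕ) : WithBot ℕ) := by
          rw [Polynomial.degree_eq_natDegree (hMmonic j).ne_zero, hMdeg]
          have : 2*j ≤ 2*n := by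
            have := Nat.lt_succ_iff.mp (mem_range.mp hj); omega
          exact_mod_cast this
        calc (C ((-1:ℝ)^j * (n.choose j) * b^(-(j:ℤ)))).degree + (M j).degree
            ≤ 0 + ((2*n : ℕ) : WithBot ℕ) := add_le_add degree_C_le h2
          _ = ((2*n : ℕ) : WithBot ℕ) := zero_add _
      have hcoeff : p.coeff (2*n) = (-1:ℝ)^n * (n.choose n) * b^(-(n:ℤ)) := by
        simp only [hp, Polynomial.finset_sum_coeff]
        rw [Finset.sum_eq_single n]
        · rw [Polynomial.coeff_C_mul, ← hMdeg n, (hMmonic n).coeff_natDegree, mul_one]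
        · intro j hj hne
          rw [Polynomial.coeff_C_mul, Polynomial.coeff_eq_zero_of_natDegree_lt, mul_zero]
          rw [hMdeg]
          have : j ≤ n := Nat.lt_succ_iff.mp (mem_range.mp hj)
          have : j < n := lt_of_le_of_ne this hne
          omega
        · intro h
          exact absurd (self_mem_range_succ n) h
      have hne : p.coeff (2*n) ≠ 0 := by
        rw [hcoeff]
        have h4 : (n.choose n : ℝ) = 1 := by simp
        rw [h4, mul_one]
        exact mul_ne_zero (pow_ne_zero _ (by norm_num)) (zpow_ne_zero _ hb.ne')
      exact Polynomial.degree_eq_of_le_of_coeff_ne_zero hle hne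
    · intro x
      rw [hP, hp, Polynomial.eval_finset_sum]
      refine Finset.sum_congr rfl fun j _ => ?_
      rw [Polynomial.eval_mul, Polynomial.eval_C, Polynomial.eval_prod]
      congr 1
      refine Finset.prod_congr rfl fun i _ => ?_
      simp only [Polynomial.eval_mul, Polynomial.eval_sub, Polynomial.eval_X, Polynomial.eval_C]
      ring
  · -- orthogonality
    intro k hk
    constructor
    · have hfe : (fun m : ℕ => P (γ₁ + m) * (γ₁ + m)^k * W₁ m)
          = (fun m : ℕ =>
            (∑ j ∈ range (n+1), (-1:ℝ)^j * (n.choose j) * b^(-(j:ℤ)) *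
              ∏ i ∈ range j, ((γ₁ + (m:ℝ) - γ₁ - i) * (γ₁ + (m:ℝ) - γ₂ - i))) * (γ₁ + (m:ℝ))^k *
            (b^m / ((m.factorial : ℝ) * Real.Gamma ((m:ℝ) + γ₁ - γ₂ + 1)))) := by
        funext m
        rw [hP, hW₁]
      rw [hfe]
      exact main_hasSum n k hk b hb γ₁ γ₂ hδ12
    · have hfe : (fun m : ℕ => P (γ₂ + m) * (γ₂ + m)^k * W₂ m)
          = (fun m : ℕ =>
            (∑ j ∈ range (n+1), (-1:ℝ)^j * (n.choose j) * b^(-(j:ℤ)) *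
              ∏ i ∈ range j, ((γ₂ + (m:ℝ) - γ₂ - i) * (γ₂ + (m:ℝ) - γ₁ - i))) * (γ₂ + (m:ℝ))^k *
            (b^m / ((m.factorial : ℝ) * Real.Gamma ((m:ℝ) + γ₂ - γ₁ + 1)))) := by
        funext m
        rw [hP, hW₂]
        congr 2
        refine Finset.sum_congr rfl fun j _ => ?_
        congr 1
        exact Finset.prod_congr rfl fun i _ => mul_comm _ _
      rw [hfe]
      exact main_hasSum n k hk b hb γ₂ γ₁ hδ21
end

section
/- Fix n ∈ ℕ, b > 0, α > 0, and γ_1, γ_2 ∈ ℝ with 0 < |γ_1 − γ_2| < 1 and α + γ_1 − γ_2 > 0. Define W_1(m) = b^m · Γ(m + γ_1 − γ_2 + α) / (m! · Γ(m + γ_1 − γ_2 + 1)) and W_2(m) = b^m · Γ(m + α) / (m! · Γ(m + γ_2 − γ_1 + 1)) for m ∈ ℕ, and define P : ℝ → ℝ by P(x) = Σ_{j=0}^{n} (−1)^j C(n,j) b^(−j) · Π_{i=0}^{j−1} [(x − γ_1 − i)(x − γ_2 − i)] · Π_{i=0}^{n−j−1} (x − γ_2 + α + i). Then: (i) W_j(m)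 > 0 for all m ∈ ℕ and j ∈ {1,2}; (ii) P is the evaluation of a real polynomial of degree exactly 2n; (iii) for every j ∈ {1,2} and every natural number k < n, the series Σ_{m=0}^{∞} P(γ_j + m) · (γ_j + m)^k · W_j(m) converges and has sum 0. -/
open Finset Filter Topology

private lemma gamma_shift_s9 (x : ℝ) (hx : 0 < x) (j : ℕ) :
    Real.Gamma (x + j) = (∏ i ∈ Finset.range j, (x + i)) * Real.Gamma x := by
  induction j with
  | zero => simp
  | succ j ih =>
    have h1 : x + ((j : ℕ) + 1 : ℕ) = (x + j) + 1 := by push_cast; ring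
    rw [h1, Real.Gamma_add_one (by positivity), ih, Finset.prod_range_succ]; ring

private lemma fact_shift (M j : ℕ) :
    ((M + j).factorial : ℝ) = (∏ i ∈ Finset.range j, ((M : ℝ) + 1 + i)) * (M.factorial : ℝ) := by
  induction j with
  | zero => simp
  | succ j ih =>
    rw [← Nat.add_assoc, Nat.factorial_succ, Finset.prod_range_succ]
    push_cast
    rw [ih]
    ring

private lemma prod_reflect (j : ℕ) (x : ℝ) :
    ∏ i ∈ Finset.range j, (x + (j : ℝ) - 1 - i) = ∏ i ∈ Finset.range j, (x + i) := by
  induction j with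
  | zero => simp
  | succ j ih =>
    rw [Finset.prod_range_succ' (fun i => x + ((j : ℕ) + 1 : ℕ) - 1 - (i : ℝ)),
      Finset.prod_range_succ]
    have h1 : ∀ k : ℕ, k ∈ Finset.range j →
        x + ((j : ℕ) + 1 : ℕ) - 1 - ((k + 1 : ℕ) : ℝ) = x + (j : ℝ) - 1 - k := by
      intro k _; push_cast; ring
    rw [Finset.prod_congr rfl h1, ih]
    push_cast
    ring

private lemma fwd_kill : ∀ n k : ℕ, k < n →
    (fwdDiff (1 : ℝ))^[n] (fun x : ℝ => x ^ k) = fun _ => (0 : ℝ) := by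
  intro n
  induction n with
  | zero => intro k hk; omega
  | succ n ih =>
    intro k hk
    rw [Function.iterate_succ_apply]
    have hΔ : fwdDiff (1 : ℝ) (fun x : ℝ => x ^ k)
        = ∑ t ∈ Finset.range k, (k.choose t : ℝ) • (fun x : ℝ => x ^ t) := by
      funext x
      simp only [fwdDiff, Finset.sum_apply, Pi.smul_apply, smul_eq_mul]
      rw [add_pow]
      rw [Finset.sum_range_succ]
      simp [mul_comm]
    rw [hΔ, fwdDiff_iter_finset_sum]
    refine funext fun y => ?_
    rw [Finset.sum_apply]
    refine Finset.sum_eq_zero fun t ht => ?_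
    rw [fwdDiff_iter_const_smul,
      ih t (lt_of_lt_of_le (Finset.mem_range.mp ht) (Nat.lt_succ_iff.mp hk))]
    simp

private lemma alt_sum_pow {n k : ℕ} (hk : k < n) (y : ℝ) :
    ∑ j ∈ Finset.range (n + 1), (-1 : ℝ) ^ j * (n.choose j : ℝ) * (y + j) ^ k = 0 := by
  have h := fwdDiff_iter_eq_sum_shift (1 : ℝ) (fun x : ℝ => x ^ k) n y
  rw [fwd_kill n k hk] at h
  have h2 : (0 : ℝ) = ∑ j ∈ Finset.range (n + 1),
      (-1 : ℝ) ^ (n - j) * (n.choose j : ℝ) * (y + j) ^ k := by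
    simpa only [zsmul_eq_mul, Int.cast_mul, Int.cast_pow, Int.cast_neg, Int.cast_one,
      Int.cast_natCast, nsmul_eq_mul, mul_one] using h
  calc ∑ j ∈ Finset.range (n + 1), (-1 : ℝ) ^ j * (n.choose j : ℝ) * (y + j) ^ k
      = ∑ j ∈ Finset.range (n + 1), (-1 : ℝ) ^ n *
          ((-1 : ℝ) ^ (n - j) * (n.choose j : ℝ) * (y + j) ^ k) := by
        refine Finset.sum_congr rfl fun j hj => ?_
        have hj' : j ≤ n := Nat.lt_succ_iff.mp (Finset.mem_range.mp hj)
        have h1 : (-1 : ℝ) ^ n * (-1) ^ (n - j) = (-1) ^ j := by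
          rw [← pow_add]
          have he : n + (n - j) = 2 * (n - j) + j := by omega
          rw [he, pow_add, pow_mul]
          norm_num
        rw [← h1]; ring
    _ = (-1 : ℝ) ^ n * ∑ j ∈ Finset.range (n + 1),
          (-1 : ℝ) ^ (n - j) * (n.choose j : ℝ) * (y + j) ^ k := by rw [Finset.mul_sum]
    _ = 0 := by rw [← h2, mul_zero]

private lemma term_ident (n : ℕ) (b a μ : ℝ) (hb : 0 < b) (ha : 0 < a) (hμ : -1 < μ)
    (j m : ℕ) (hjn : j ≤ n) :
    b ^ (-(j : ℤ)) * (∏ i ∈ Finset.range j, (((m : ℝ) - i) * ((m : ℝ) + μ - i))) *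
      (∏ i ∈ Finset.range (n - j), ((m : ℝ) + a + i)) *
      (b ^ m * Real.Gamma ((m : ℝ) + a) / ((m.factorial : ℝ) * Real.Gamma ((m : ℝ) + μ + 1)))
    = if j ≤ m then
        b ^ (m - j) * Real.Gamma (((m - j : ℕ) : ℝ) + a + (n : ℝ)) /
          (((m - j).factorial : ℝ) * Real.Gamma (((m - j : ℕ) : ℝ) + μ + 1))
      else 0 := by
  by_cases hjm : j ≤ m
  · obtain ⟨M, rfl⟩ := Nat.exists_eq_add_of_le hjm
    rw [if_pos hjm, Nat.add_sub_cancel_left]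
    have hA : (∏ i ∈ Finset.range j, (((j + M : ℕ) : ℝ) - i))
        = ∏ i ∈ Finset.range j, ((M : ℝ) + 1 + i) := by
      rw [← prod_reflect j ((M : ℝ) + 1)]
      exact Finset.prod_congr rfl fun i _ => by push_cast; ring
    have hB : (∏ i ∈ Finset.range j, (((j + M : ℕ) : ℝ) + μ - i))
        = ∏ i ∈ Finset.range j, ((M : ℝ) + μ + 1 + i) := by
      rw [← prod_reflect j ((M : ℝ) + μ + 1)]
      exact Finset.prod_congr rfl fun i _ => by push_cast; ring
    have hfact : (((j + M).factorial : ℝ))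
        = (∏ i ∈ Finset.range j, ((M : ℝ) + 1 + i)) * (M.factorial : ℝ) := by
      rw [Nat.add_comm j M]; exact fact_shift M j
    have hμM : 0 < (M : ℝ) + μ + 1 := by
      have : (0 : ℝ) ≤ M := Nat.cast_nonneg M
      linarith
    have hG2 : Real.Gamma (((j + M : ℕ) : ℝ) + μ + 1)
        = (∏ i ∈ Finset.range j, ((M : ℝ) + μ + 1 + i)) * Real.Gamma ((M : ℝ) + μ + 1) := by
      have harg : ((j + M : ℕ) : ℝ) + μ + 1 = ((M : ℝ) + μ + 1) + j := by push_cast; ring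
      rw [harg, gamma_shift_s9 _ hμM j]
    have hG3 : Real.Gamma ((M : ℝ) + a + (n : ℝ))
        = (∏ i ∈ Finset.range (n - j), (((j + M : ℕ) : ℝ) + a + i)) *
          Real.Gamma (((j + M : ℕ) : ℝ) + a) := by
      have hpos : 0 < ((j + M : ℕ) : ℝ) + a := by positivity
      have harg : (M : ℝ) + a + (n : ℝ) = (((j + M : ℕ) : ℝ) + a) + ((n - j : ℕ) : ℝ) := by
        push_cast [Nat.cast_sub hjn]
        ring
      rw [harg, gamma_shift_s9 _ hpos (n - j)]
    rw [Finset.prod_mul_distrib, hA, hB, hfact, hG2, hG3]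
    have hbne : b ≠ 0 := hb.ne'
    have hzp : b ^ (-(j : ℤ)) = (b ^ j)⁻¹ := by
      rw [zpow_neg, zpow_natCast]
    have hpowadd : b ^ (j + M) = b ^ j * b ^ M := pow_add b j M
    have hP1 : (0 : ℝ) < ∏ i ∈ Finset.range j, ((M : ℝ) + 1 + i) :=
      Finset.prod_pos fun i _ => by positivity
    have hP2 : (0 : ℝ) < ∏ i ∈ Finset.range j, ((M : ℝ) + μ + 1 + i) :=
      Finset.prod_pos fun i _ => by
        have : (0 : ℝ) ≤ (i : ℝ) := Nat.cast_nonneg i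
        linarith
    have hGa : (0 : ℝ) < Real.Gamma (((j + M : ℕ) : ℝ) + a) :=
      Real.Gamma_pos_of_pos (by positivity)
    have hGμ : (0 : ℝ) < Real.Gamma ((M : ℝ) + μ + 1) := Real.Gamma_pos_of_pos hμM
    have hMf : (0 : ℝ) < (M.factorial : ℝ) := Nat.cast_pos.mpr M.factorial_pos
    rw [hzp, hpowadd]
    field_simp
  · rw [if_neg hjm]
    have hz : (∏ i ∈ Finset.range j, (((m : ℝ) - i) * ((m : ℝ) + μ - i))) = 0 :=
      Finset.prod_eq_zero (i := m) (Finset.mem_range.mpr (by omega)) (by simp)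
    rw [hz]
    ring

private lemma Vpos {n : ℕ} {b a μ : ℝ} (hb : 0 < b) (ha : 0 < a) (hμ : -1 < μ) (M : ℕ) :
    0 < b ^ M * Real.Gamma ((M : ℝ) + a + (n : ℝ)) /
      ((M.factorial : ℝ) * Real.Gamma ((M : ℝ) + μ + 1)) := by
  have h1 : 0 < (M : ℝ) + a + n := by positivity
  have h2 : 0 < (M : ℝ) + μ + 1 := by
    have : (0 : ℝ) ≤ M := Nat.cast_nonneg M
    linarith
  exact div_pos (mul_pos (pow_pos hb M) (Real.Gamma_pos_of_pos h1))
    (mul_pos (Nat.cast_pos.mpr M.factorial_pos) (Real.Gamma_pos_of_pos h2))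

private lemma Vrat {n : ℕ} {b a μ : ℝ} (hb : 0 < b) (ha : 0 < a) (hμ : -1 < μ) (M : ℕ) :
    b ^ (M + 1) * Real.Gamma (((M + 1 : ℕ) : ℝ) + a + (n : ℝ)) /
      (((M + 1).factorial : ℝ) * Real.Gamma (((M + 1 : ℕ) : ℝ) + μ + 1))
    = (b * ((M : ℝ) + a + n) / (((M : ℝ) + 1) * ((M : ℝ) + μ + 1))) *
      (b ^ M * Real.Gamma ((M : ℝ) + a + (n : ℝ)) /
        ((M.factorial : ℝ) * Real.Gamma ((M : ℝ) + μ + 1))) := by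
  have h2 : 0 < (M : ℝ) + μ + 1 := by
    have : (0 : ℝ) ≤ M := Nat.cast_nonneg M
    linarith
  have hg1 : Real.Gamma (((M + 1 : ℕ) : ℝ) + a + n)
      = ((M : ℝ) + a + n) * Real.Gamma ((M : ℝ) + a + n) := by
    have he : (((M + 1 : ℕ) : ℝ) + a + n) = ((M : ℝ) + a + n) + 1 := by push_cast; ring
    rw [he, Real.Gamma_add_one (by positivity)]
  have hg2 : Real.Gamma (((M + 1 : ℕ) : ℝ) + μ + 1)
      = ((M : ℝ) + μ + 1) * Real.Gamma ((M : ℝ) + μ + 1) := by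
    have he : (((M + 1 : ℕ) : ℝ) + μ + 1) = ((M : ℝ) + μ + 1) + 1 := by push_cast; ring
    rw [he, Real.Gamma_add_one (ne_of_gt h2)]
  have hgn1 : Real.Gamma ((M : ℝ) + a + n) ≠ 0 :=
    ne_of_gt (Real.Gamma_pos_of_pos (by positivity))
  have hgn2 : Real.Gamma ((M : ℝ) + μ + 1) ≠ 0 := ne_of_gt (Real.Gamma_pos_of_pos h2)
  have hfn : ((M.factorial : ℝ)) ≠ 0 := Nat.cast_ne_zero.mpr M.factorial_pos.ne'
  rw [hg1, hg2, Nat.factorial_succ, pow_succ]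
  push_cast
  field_simp

private lemma Vsummable (n : ℕ) (b a μ : ℝ) (hb : 0 < b) (ha : 0 < a) (hμ : -1 < μ)
    (c : ℝ) (k : ℕ) :
    Summable (fun M : ℕ => (c + M) ^ k *
      (b ^ M * Real.Gamma ((M : ℝ) + a + (n : ℝ)) /
        ((M.factorial : ℝ) * Real.Gamma ((M : ℝ) + μ + 1)))) := by
  set V : ℕ → ℝ := fun M => b ^ M * Real.Gamma ((M : ℝ) + a + (n : ℝ)) /
      ((M.factorial : ℝ) * Real.Gamma ((M : ℝ) + μ + 1)) with hV
  set f : ℕ → ℝ := fun M => (c + M) ^ k * V M with hf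
  have hcm : Tendsto (fun M : ℕ => c + (M : ℝ)) atTop atTop :=
    tendsto_atTop_add_const_left _ c tendsto_natCast_atTop_atTop
  have hev : ∀ᶠ M : ℕ in atTop, 0 < c + (M : ℝ) := hcm.eventually_gt_atTop 0
  have hfpos : ∀ᶠ M : ℕ in atTop, f M ≠ 0 := by
    filter_upwards [hev] with M hM
    have hV0 : 0 < V M := Vpos hb ha hμ M
    have : 0 < f M := by
      rw [hf]
      positivity
    exact this.ne'
  have hratio : ∀ᶠ M : ℕ in atTop, ‖f (M + 1)‖ / ‖f M‖
      = ((c + M + 1) / (c + M)) ^ k *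
        (b * ((M : ℝ) + a + n) / (((M : ℝ) + 1) * ((M : ℝ) + μ + 1))) := by
    filter_upwards [hev] with M hM
    have h2 : 0 < (M : ℝ) + μ + 1 := by
      have : (0 : ℝ) ≤ M := Nat.cast_nonneg M
      linarith
    have hV0 : 0 < V M := Vpos hb ha hμ M
    have hV1 : V (M + 1) = (b * ((M : ℝ) + a + n) / (((M : ℝ) + 1) * ((M : ℝ) + μ + 1)))
        * V M := by
      simpa [hV] using Vrat (n := n) hb ha hμ M
    have hM1 : (0 : ℝ) < c + (M + 1 : ℕ) := by push_cast; linarith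
    have hfM : f M = (c + M) ^ k * V M := rfl
    have hfM1 : f (M + 1) = (c + ((M + 1 : ℕ) : ℝ)) ^ k * V (M + 1) := rfl
    rw [Real.norm_eq_abs, Real.norm_eq_abs, hfM, hfM1, hV1]
    rw [abs_of_pos (by positivity), abs_of_pos (by
      have : (0 : ℝ) < b * ((M : ℝ) + a + n) / (((M : ℝ) + 1) * ((M : ℝ) + μ + 1)) := by
        positivity
      positivity)]
    push_cast
    rw [div_pow]
    field_simp
    ring
  have h01 : Tendsto (fun M : ℕ => (1 : ℝ) / (c + M)) atTop (𝓝 0) :=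
    Tendsto.div_atTop tendsto_const_nhds hcm
  have hbase : Tendsto (fun M : ℕ => 1 + (1 : ℝ) / (c + M)) atTop (𝓝 1) := by
    have := (tendsto_const_nhds (x := (1 : ℝ)) (f := atTop (α := ℕ))).add h01
    simpa using this
  have hT1 : Tendsto (fun M : ℕ => ((c + M + 1) / (c + M)) ^ k) atTop (𝓝 1) := by
    have hb2 : Tendsto (fun M : ℕ => (c + M + 1) / (c + M)) atTop (𝓝 1) := by
      refine hbase.congr' ?_
      filter_upwards [hev] with M hM
      field_simp
    simpa using hb2.pow k
  have htq : Tendsto (fun M : ℕ => ((M : ℝ) + (a + n)) / ((M : ℝ) + 1)) atTop (𝓝 1) := by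
    have h02 : Tendsto (fun M : ℕ => (a + n - 1) / ((M : ℝ) + 1)) atTop (𝓝 0) :=
      Tendsto.div_atTop tendsto_const_nhds
        (tendsto_atTop_add_const_right _ 1 tendsto_natCast_atTop_atTop)
    have hq : Tendsto (fun M : ℕ => 1 + (a + n - 1) / ((M : ℝ) + 1)) atTop (𝓝 1) := by
      have := (tendsto_const_nhds (x := (1 : ℝ)) (f := atTop (α := ℕ))).add h02
      simpa using this
    refine hq.congr fun M => ?_
    have hM1 : ((M : ℝ) + 1) ≠ 0 := by positivity
    field_simp
    ring
  have hinv : Tendsto (fun M : ℕ => ((M : ℝ) + μ + 1)⁻¹) atTop (𝓝 0) := by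
    refine Tendsto.inv_tendsto_atTop ?_
    have := tendsto_atTop_add_const_right atTop (μ + 1) tendsto_natCast_atTop_atTop
    refine this.congr fun M => by ring
  have hT2 : Tendsto (fun M : ℕ =>
      b * ((M : ℝ) + a + n) / (((M : ℝ) + 1) * ((M : ℝ) + μ + 1))) atTop (𝓝 0) := by
    have := ((htq.const_mul b).mul hinv)
    simp only [mul_zero] at this
    refine this.congr fun M => ?_
    field_simp
    ring
  have hfin : Tendsto (fun M : ℕ => ‖f (M + 1)‖ / ‖f M‖) atTop (𝓝 0) := by
    have := hT1.mul hT2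
    rw [one_mul] at this
    refine this.congr' ?_
    filter_upwards [hratio] with M h
    exact h.symm
  exact summable_of_ratio_test_tendsto_lt_one zero_lt_one hfpos hfin

private lemma key_hasSum (n : ℕ) (b a μ γ : ℝ) (hb : 0 < b) (ha : 0 < a) (hμ : -1 < μ)
    (k : ℕ) (hk : k < n) :
    HasSum (fun m : ℕ =>
      (∑ j ∈ Finset.range (n + 1), (-1 : ℝ) ^ j * (n.choose j : ℝ) * b ^ (-(j : ℤ)) *
        (∏ i ∈ Finset.range j, (((m : ℝ) - i) * ((m : ℝ) + μ - i))) *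
        ∏ i ∈ Finset.range (n - j), ((m : ℝ) + a + i)) * (γ + m) ^ k *
      (b ^ m * Real.Gamma ((m : ℝ) + a) /
        ((m.factorial : ℝ) * Real.Gamma ((m : ℝ) + μ + 1)))) 0 := by
  classical
  set V : ℕ → ℝ := fun M => b ^ M * Real.Gamma ((M : ℝ) + a + (n : ℝ)) /
      ((M.factorial : ℝ) * Real.Gamma ((M : ℝ) + μ + 1)) with hV
  set G : ℕ → ℕ → ℝ := fun j m => (γ + m) ^ k * (if j ≤ m then V (m - j) else 0) with hG
  set S : ℕ → ℝ := fun j => ∑' M : ℕ, ((γ + j) + M) ^ k * V M with hS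
  have hsum : ∀ j : ℕ, Summable (fun M : ℕ => ((γ + j) + M) ^ k * V M) := fun j =>
    Vsummable n b a μ hb ha hμ (γ + j) k
  have hGj : ∀ j : ℕ, HasSum (G j) (S j) := by
    intro j
    have hinj : Function.Injective (fun M : ℕ => M + j) := add_left_injective j
    have hvan : ∀ m, m ∉ Set.range (fun M : ℕ => M + j) → G j m = 0 := by
      intro m hm
      have hninj : ¬ j ≤ m := fun h => hm ⟨m - j, by simp; omega⟩
      simp [hG, hninj]
    rw [← hinj.hasSum_iff hvan]
    have hcomp : (G j) ∘ (fun M : ℕ => M + j) = fun M : ℕ => ((γ + j) + M) ^ k * V M := by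
      funext M
      simp only [Function.comp, hG]
      rw [if_pos (Nat.le_add_left j M), Nat.add_sub_cancel]
      push_cast
      ring
    rw [hcomp]
    exact (hsum j).hasSum
  have htotal : HasSum (fun m : ℕ => ∑ j ∈ Finset.range (n + 1),
      ((-1 : ℝ) ^ j * (n.choose j : ℝ)) * G j m)
      (∑ j ∈ Finset.range (n + 1), ((-1 : ℝ) ^ j * (n.choose j : ℝ)) * S j) :=
    hasSum_sum fun j _ => (hGj j).mul_left _
  have hzero : (∑ j ∈ Finset.range (n + 1), ((-1 : ℝ) ^ j * (n.choose j : ℝ)) * S j) = 0 := by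
    have h3 : HasSum (fun M : ℕ => ∑ j ∈ Finset.range (n + 1),
        ((-1 : ℝ) ^ j * (n.choose j : ℝ)) * (((γ + j) + M) ^ k * V M))
        (∑ j ∈ Finset.range (n + 1), ((-1 : ℝ) ^ j * (n.choose j : ℝ)) * S j) :=
      hasSum_sum fun j _ => ((hsum j).hasSum).mul_left _
    have h4 : (fun M : ℕ => ∑ j ∈ Finset.range (n + 1),
        ((-1 : ℝ) ^ j * (n.choose j : ℝ)) * (((γ + j) + M) ^ k * V M))
        = fun _ : ℕ => (0 : ℝ) := by
      funext M
      have halt := alt_sum_pow hk (γ + M)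
      calc ∑ j ∈ Finset.range (n + 1),
            ((-1 : ℝ) ^ j * (n.choose j : ℝ)) * (((γ + j) + M) ^ k * V M)
          = (∑ j ∈ Finset.range (n + 1),
              (-1 : ℝ) ^ j * (n.choose j : ℝ) * ((γ + M) + j) ^ k) * V M := by
            rw [Finset.sum_mul]
            refine Finset.sum_congr rfl fun j _ => ?_
            have he : (γ + (j : ℝ)) + M = (γ + M) + j := by ring
            rw [he]
            ring
        _ = 0 := by rw [halt, zero_mul]
    rw [h4] at h3
    exact h3.unique hasSum_zero
  rw [hzero] at htotal
  have hident : ∀ m : ℕ,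
      (∑ j ∈ Finset.range (n + 1), (-1 : ℝ) ^ j * (n.choose j : ℝ) * b ^ (-(j : ℤ)) *
        (∏ i ∈ Finset.range j, (((m : ℝ) - i) * ((m : ℝ) + μ - i))) *
        ∏ i ∈ Finset.range (n - j), ((m : ℝ) + a + i)) * (γ + m) ^ k *
      (b ^ m * Real.Gamma ((m : ℝ) + a) /
        ((m.factorial : ℝ) * Real.Gamma ((m : ℝ) + μ + 1)))
      = ∑ j ∈ Finset.range (n + 1), ((-1 : ℝ) ^ j * (n.choose j : ℝ)) * G j m := by
    intro m
    rw [Finset.sum_mul, Finset.sum_mul]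
    refine Finset.sum_congr rfl fun j hj => ?_
    have hjn : j ≤ n := Nat.lt_succ_iff.mp (Finset.mem_range.mp hj)
    have hti := term_ident n b a μ hb ha hμ j m hjn
    have hGval : G j m = (γ + m) ^ k * (if j ≤ m then
        b ^ (m - j) * Real.Gamma (((m - j : ℕ) : ℝ) + a + (n : ℝ)) /
          (((m - j).factorial : ℝ) * Real.Gamma (((m - j : ℕ) : ℝ) + μ + 1))
      else 0) := by
      simp only [hG, hV]
    rw [hGval, ← hti]
    ring
  rw [← funext hident] at htotal
  exact htotal

private lemma deg_linprod (s : ℕ) (f : ℕ → ℝ) :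
    (∏ i ∈ Finset.range s, (Polynomial.X - Polynomial.C (f i))).degree = (s : WithBot ℕ) := by
  induction s with
  | zero => simp
  | succ s ih =>
    rw [Finset.prod_range_succ, Polynomial.degree_mul, ih, Polynomial.degree_X_sub_C]
    norm_cast

/-- The paper's Charlier–Meixner family: the weights `W_j` on the interlacing shifted
lattices `γ_j + ℤ₊` are positive, the Rodrigues polynomial `P` has degree exactly `2n`,
and `P` is orthogonal to `x^k`, `k < n`, with respect to both discrete measures. -/
theorem stmt_9 (n : ℕ) (b α : ℝ) (hb : 0 < b) (hα : 0 < α) (γ₁ γ₂ : ℝ)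
    (hγ0 : 0 < |γ₁ - γ₂|) (hγ1 : |γ₁ - γ₂| < 1) (hαγ : 0 < α + γ₁ - γ₂) (W₁ W₂ : ℕ → ℝ)
    (hW₁ : ∀ m : ℕ, W₁ m = b ^ m * Real.Gamma ((m : ℝ) + γ₁ - γ₂ + α) /
      ((m.factorial : ℝ) * Real.Gamma ((m : ℝ) + γ₁ - γ₂ + 1)))
    (hW₂ : ∀ m : ℕ, W₂ m = b ^ m * Real.Gamma ((m : ℝ) + α) /
      ((m.factorial : ℝ) * Real.Gamma ((m : ℝ) + γ₂ - γ₁ + 1)))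
    (P : ℝ → ℝ)
    (hP : ∀ x : ℝ, P x = ∑ j ∈ Finset.range (n + 1),
      (-1 : ℝ) ^ j * (n.choose j : ℝ) * b ^ (-(j : ℤ)) *
        (∏ i ∈ Finset.range j, ((x - γ₁ - (i : ℝ)) * (x - γ₂ - (i : ℝ)))) *
        ∏ i ∈ Finset.range (n - j), (x - γ₂ + α + (i : ℝ))) :
    (∀ m : ℕ, 0 < W₁ m ∧ 0 < W₂ m) ∧
    (∃ p : Polynomial ℝ, p.degree = (2 * n : ℕ) ∧ ∀ x : ℝ, P x = p.eval x) ∧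
    (∀ k : ℕ, k < n →
      HasSum (fun m : ℕ => P (γ₁ + m) * (γ₁ + m) ^ k * W₁ m) 0 ∧
      HasSum (fun m : ℕ => P (γ₂ + m) * (γ₂ + m) ^ k * W₂ m) 0) := by
  have habs := abs_lt.mp hγ1
  have hμ1 : (-1 : ℝ) < γ₁ - γ₂ := habs.1
  have hμ2 : (-1 : ℝ) < γ₂ - γ₁ := by linarith [habs.2]
  have ha1 : (0 : ℝ) < γ₁ - γ₂ + α := by linarith
  constructor
  · -- positivity of weights
    intro m
    have hm0 : (0 : ℝ) ≤ m := Nat.cast_nonneg m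
    constructor
    · rw [hW₁ m]
      have h1 : 0 < Real.Gamma ((m : ℝ) + γ₁ - γ₂ + α) :=
        Real.Gamma_pos_of_pos (by linarith)
      have h2 : 0 < Real.Gamma ((m : ℝ) + γ₁ - γ₂ + 1) :=
        Real.Gamma_pos_of_pos (by linarith)
      have h3 : (0 : ℝ) < m.factorial := Nat.cast_pos.mpr m.factorial_pos
      positivity
    · rw [hW₂ m]
      have h1 : 0 < Real.Gamma ((m : ℝ) + α) := Real.Gamma_pos_of_pos (by linarith)
      have h2 : 0 < Real.Gamma ((m : ℝ) + γ₂ - γ₁ + 1) :=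
        Real.Gamma_pos_of_pos (by linarith)
      have h3 : (0 : ℝ) < m.factorial := Nat.cast_pos.mpr m.factorial_pos
      positivity
  refine ⟨?_, ?_⟩
  · -- the polynomial
    classical
    set T : ℕ → Polynomial ℝ := fun j =>
      Polynomial.C ((-1 : ℝ) ^ j * (n.choose j : ℝ) * b ^ (-(j : ℤ))) *
        ((∏ i ∈ Finset.range j, (Polynomial.X - Polynomial.C (γ₁ + i))) *
         (∏ i ∈ Finset.range j, (Polynomial.X - Polynomial.C (γ₂ + i))) *
         (∏ i ∈ Finset.range (n - j), (Polynomial.X - Polynomial.C (γ₂ - α - i)))) with hT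
    refine ⟨∑ j ∈ Finset.range (n + 1), T j, ?_, ?_⟩
    · -- degree
      have hdegT : ∀ j, j ≤ n → (T j).degree = ((n + j : ℕ) : WithBot ℕ) := by
        intro j hj
        have hcne : ((-1 : ℝ) ^ j * (n.choose j : ℝ) * b ^ (-(j : ℤ))) ≠ 0 := by
          have h1 : ((-1 : ℝ) ^ j) ≠ 0 := pow_ne_zero _ (by norm_num)
          have h2 : ((n.choose j : ℝ)) ≠ 0 :=
            Nat.cast_ne_zero.mpr (Nat.choose_pos hj).ne'
          have h3 : b ^ (-(j : ℤ)) ≠ 0 := zpow_ne_zero _ hb.ne'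
          exact mul_ne_zero (mul_ne_zero h1 h2) h3
        rw [hT]
        simp only
        rw [Polynomial.degree_mul, Polynomial.degree_mul, Polynomial.degree_mul,
          Polynomial.degree_C hcne, deg_linprod, deg_linprod, deg_linprod]
        have : (0 : WithBot ℕ) + ((j : ℕ) + (j : ℕ) + ((n - j : ℕ) : WithBot ℕ))
            = ((j + j + (n - j) : ℕ) : WithBot ℕ) := by
          rw [zero_add]
          norm_cast
        rw [this]
        congr 1
        omega
      rw [Finset.sum_range_succ]
      have hdeglast : (T n).degree = ((2 * n : ℕ) : WithBot ℕ) := by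
        rw [hdegT n le_rfl]
        congr 1
        omega
      have hdegsum : (∑ j ∈ Finset.range n, T j).degree < ((2 * n : ℕ) : WithBot ℕ) := by
        refine lt_of_le_of_lt (Polynomial.degree_sum_le _ _) ?_
        rw [Finset.sup_lt_iff (by exact WithBot.bot_lt_coe _)]
        intro j hj
        have hjn : j < n := Finset.mem_range.mp hj
        rw [hdegT j hjn.le]
        exact_mod_cast (show n + j < 2 * n by omega)
      rw [Polynomial.degree_add_eq_right_of_degree_lt (by rw [hdeglast]; exact hdegsum),
        hdeglast]
    · -- evaluation
      intro x
      rw [hP]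
      rw [Polynomial.eval_finset_sum]
      refine Finset.sum_congr rfl fun j hj => ?_
      rw [hT]
      simp only [Polynomial.eval_mul, Polynomial.eval_C, Polynomial.eval_prod,
        Polynomial.eval_sub, Polynomial.eval_X]
      rw [Finset.prod_mul_distrib]
      have e1 : ∏ i ∈ Finset.range j, (x - γ₁ - (i : ℝ))
          = ∏ i ∈ Finset.range j, (x - (γ₁ + i)) :=
        Finset.prod_congr rfl fun i _ => by ring
      have e2 : ∏ i ∈ Finset.range j, (x - γ₂ - (i : ℝ))
          = ∏ i ∈ Finset.range j, (x - (γ₂ + i)) :=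
        Finset.prod_congr rfl fun i _ => by ring
      have e3 : ∏ i ∈ Finset.range (n - j), (x - γ₂ + α + (i : ℝ))
          = ∏ i ∈ Finset.range (n - j), (x - (γ₂ - α - i)) :=
        Finset.prod_congr rfl fun i _ => by ring
      rw [e1, e2, e3]
      ring
  · -- orthogonality
    intro k hk
    constructor
    · have hkey := key_hasSum n b (γ₁ - γ₂ + α) (γ₁ - γ₂) γ₁ hb ha1 hμ1 k hk
      have hident : (fun m : ℕ => P (γ₁ + m) * (γ₁ + m) ^ k * W₁ m)
          = (fun m : ℕ =>
            (∑ j ∈ Finset.range (n + 1), (-1 : ℝ) ^ j * (n.choose j : ℝ) * b ^ (-(j : ℤ)) *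
              (∏ i ∈ Finset.range j, (((m : ℝ) - i) * ((m : ℝ) + (γ₁ - γ₂) - i))) *
              ∏ i ∈ Finset.range (n - j), ((m : ℝ) + (γ₁ - γ₂ + α) + i)) * (γ₁ + m) ^ k *
            (b ^ m * Real.Gamma ((m : ℝ) + (γ₁ - γ₂ + α)) /
              ((m.factorial : ℝ) * Real.Gamma ((m : ℝ) + (γ₁ - γ₂) + 1)))) := by
        funext m
        rw [hP, hW₁]
        have hs : ∑ j ∈ Finset.range (n + 1),
              (-1 : ℝ) ^ j * (n.choose j : ℝ) * b ^ (-(j : ℤ)) *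
              (∏ i ∈ Finset.range j, ((γ₁ + m - γ₁ - (i : ℝ)) * (γ₁ + m - γ₂ - (i : ℝ)))) *
              ∏ i ∈ Finset.range (n - j), (γ₁ + m - γ₂ + α + (i : ℝ))
            = ∑ j ∈ Finset.range (n + 1),
              (-1 : ℝ) ^ j * (n.choose j : ℝ) * b ^ (-(j : ℤ)) *
              (∏ i ∈ Finset.range j, (((m : ℝ) - i) * ((m : ℝ) + (γ₁ - γ₂) - i))) *
              ∏ i ∈ Finset.range (n - j), ((m : ℝ) + (γ₁ - γ₂ + α) + i) := by
          refine Finset.sum_congr rfl fun j _ => ?_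
          have p1 : ∏ i ∈ Finset.range j, ((γ₁ + m - γ₁ - (i : ℝ)) * (γ₁ + m - γ₂ - (i : ℝ)))
              = ∏ i ∈ Finset.range j, (((m : ℝ) - i) * ((m : ℝ) + (γ₁ - γ₂) - i)) :=
            Finset.prod_congr rfl fun i _ => by ring
          have p2 : ∏ i ∈ Finset.range (n - j), (γ₁ + m - γ₂ + α + (i : ℝ))
              = ∏ i ∈ Finset.range (n - j), ((m : ℝ) + (γ₁ - γ₂ + α) + i) :=
            Finset.prod_congr rfl fun i _ => by ring
          rw [p1, p2]
        have hg1 : Real.Gamma ((m : ℝ) + γ₁ - γ₂ + α)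
            = Real.Gamma ((m : ℝ) + (γ₁ - γ₂ + α)) := by
          congr 1; ring
        have hg2 : Real.Gamma ((m : ℝ) + γ₁ - γ₂ + 1)
            = Real.Gamma ((m : ℝ) + (γ₁ - γ₂) + 1) := by
          congr 1; ring
        rw [hs, hg1, hg2]
      rw [hident]
      exact hkey
    · have hkey := key_hasSum n b α (γ₂ - γ₁) γ₂ hb hα hμ2 k hk
      have hident : (fun m : ℕ => P (γ₂ + m) * (γ₂ + m) ^ k * W₂ m)
          = (fun m : ℕ =>
            (∑ j ∈ Finset.range (n + 1), (-1 : ℝ) ^ j * (n.choose j : ℝ) * b ^ (-(j : ℤ)) *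
              (∏ i ∈ Finset.range j, (((m : ℝ) - i) * ((m : ℝ) + (γ₂ - γ₁) - i))) *
              ∏ i ∈ Finset.range (n - j), ((m : ℝ) + α + i)) * (γ₂ + m) ^ k *
            (b ^ m * Real.Gamma ((m : ℝ) + α) /
              ((m.factorial : ℝ) * Real.Gamma ((m : ℝ) + (γ₂ - γ₁) + 1)))) := by
        funext m
        rw [hP, hW₂]
        have hs : ∑ j ∈ Finset.range (n + 1),
              (-1 : ℝ) ^ j * (n.choose j : ℝ) * b ^ (-(j : ℤ)) *
              (∏ i ∈ Finset.range j, ((γ₂ + m - γ₁ - (i : ℝ)) * (γ₂ + m - γ₂ - (i : ℝ)))) *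
              ∏ i ∈ Finset.range (n - j), (γ₂ + m - γ₂ + α + (i : ℝ))
            = ∑ j ∈ Finset.range (n + 1),
              (-1 : ℝ) ^ j * (n.choose j : ℝ) * b ^ (-(j : ℤ)) *
              (∏ i ∈ Finset.range j, (((m : ℝ) - i) * ((m : ℝ) + (γ₂ - γ₁) - i))) *
              ∏ i ∈ Finset.range (n - j), ((m : ℝ) + α + i) := by
          refine Finset.sum_congr rfl fun j _ => ?_
          have p1 : ∏ i ∈ Finset.range j, ((γ₂ + m - γ₁ - (i : ℝ)) * (γ₂ + m - γ₂ - (i : ℝ)))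
              = ∏ i ∈ Finset.range j, (((m : ℝ) - i) * ((m : ℝ) + (γ₂ - γ₁) - i)) :=
            Finset.prod_congr rfl fun i _ => by ring
          have p2 : ∏ i ∈ Finset.range (n - j), (γ₂ + m - γ₂ + α + (i : ℝ))
              = ∏ i ∈ Finset.range (n - j), ((m : ℝ) + α + i) :=
            Finset.prod_congr rfl fun i _ => by ring
          rw [p1, p2]
        have hg2 : Real.Gamma ((m : ℝ) + γ₂ - γ₁ + 1)
            = Real.Gamma ((m : ℝ) + (γ₂ - γ₁) + 1) := by
          congr 1; ring
        rw [hs, hg2]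
      rw [hident]
      exact hkey
end

section
/- Fix n ∈ ℕ, b ∈ ℝ with 0 < b < 1, α_1 > 0, α_2 > 0, and γ_1, γ_2 ∈ ℝ with 0 < |γ_1 − γ_2| < 1 and −α_2 < γ_1 − γ_2 < α_1. Define W_1(m) = b^m · Γ(m + α_1) · Γ(m + γ_1 − γ_2 + α_2) / (m! · Γ(m + γ_1 − γ_2 + 1)) and W_2(m) = b^m · Γ(m + γ_2 − γ_1 + α_1) · Γ(m + α_2) / (m! · Γ(m + γ_2 − γ_1 + 1)) for m ∈ ℕ, and define P : ℝ → ℝ by P(x) = Σ_{j=0}^{n} (−1)^j C(n,j) b^(−j) · Π_{i=0}^{j−1} [(x − γ_1 − i)(x − γ_2 − i)] · Π_{i=0}^{n−j−1} [(x − γ_1 + α_1 + i)(x − γ_2 + α_2 + i)]. Then: (i) W_j(m) > 0 for all m ∈ ℕ and j ∈ {1,2}; (ii) P is the evaluation of a real polynomial of degree exactly 2n; (iii) for every j ∈ {1,2} and every natural number k < n, the series Σ_{m=0}^{∞} P(γ_j + m) · (γ_j + m)^k · W_j(m) converges and has sum 0. -/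
set_option maxHeartbeats 1000000
open Finset Filter Polynomial

lemma aux_Gamma_add_nat (x : ℝ) (r : ℕ) (hx : ∀ i : ℕ, i < r → x + i ≠ 0) :
    Real.Gamma (x + r) = Real.Gamma x * ∏ i ∈ range r, (x + i) := by
  induction r with
  | zero => simp
  | succ r ih =>
    have h1 : x + (r+1 : ℕ) = (x + r) + 1 := by push_cast; ring
    rw [h1, Real.Gamma_add_one (hx r (Nat.lt_succ_self r)),
      ih (fun i hi => hx i (hi.trans (Nat.lt_succ_self r))), prod_range_succ]
    ring

lemma aux_Gamma_sub_nat (x : ℝ) (j : ℕ) (h : ∀ i : ℕ, i < j → x - i ≠ 0) :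
    Real.Gamma (x + 1) = Real.Gamma (x + 1 - j) * ∏ i ∈ range j, (x - i) := by
  induction j with
  | zero => simp
  | succ j ih =>
    have h2 : x + 1 - j = (x - j) + 1 := by ring
    have h3 : (x - j) ≠ 0 := h j (Nat.lt_succ_self j)
    have := ih (fun i hi => h i (hi.trans (Nat.lt_succ_self j)))
    rw [this, h2, Real.Gamma_add_one h3, prod_range_succ]
    have h4 : x + 1 - (j+1 : ℕ) = x - j := by push_cast; ring
    rw [h4]; ring

lemma aux_fact_prod (m j : ℕ) (h : j ≤ m) :
    (∏ i ∈ range j, ((m:ℝ) - i)) * ((m-j).factorial : ℝ) = (m.factorial : ℝ) := by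
  induction j with
  | zero => simp
  | succ j ih =>
    have hj : j ≤ m := Nat.le_of_succ_le h
    have hmj : m - j = (m - (j+1)) + 1 := by omega
    rw [prod_range_succ]
    have := ih hj
    rw [← this, hmj, Nat.factorial_succ]
    have hc : ((m:ℝ) - j) = ((m - (j+1) + 1 : ℕ) : ℝ) := by
      push_cast [Nat.cast_sub h]; ring
    rw [Nat.cast_mul]
    rw [mul_assoc, mul_comm ((m:ℝ) - j), ← mul_assoc, ← hmj]
    rw [hc]
    push_cast
    have hc2 : ((m - (j+1) : ℕ):ℝ) + 1 = ((m - j : ℕ):ℝ) := by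
      have h5 : m - (j+1) + 1 = m - j := by omega
      exact_mod_cast congrArg (Nat.cast : ℕ → ℝ) h5
    rw [hc2]
    have hc3 : ((m - j : ℕ):ℝ) = (m:ℝ) - j := by
      rw [Nat.cast_sub hj]
    rw [hc3]; ring

lemma aux_alt_rec (n : ℕ) (f : ℕ → ℝ) :
    ∑ j ∈ range (n+2), (-1:ℝ)^j * ((n+1).choose j : ℝ) * f j
      = ∑ j ∈ range (n+1), (-1:ℝ)^j * (n.choose j : ℝ) * (f j - f (j+1)) := by
  rw [Finset.sum_range_succ' (fun j => (-1:ℝ)^j * ((n+1).choose j : ℝ) * f j) (n+1)]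
  have h1 : ∀ j, ((n+1).choose (j+1) : ℝ) = (n.choose j : ℝ) + (n.choose (j+1) : ℝ) := by
    intro j; rw [Nat.choose_succ_succ]; push_cast; ring
  simp only [h1]
  have h2 : ∑ j ∈ range (n+1), (-1:ℝ)^(j+1) * ((n.choose j : ℝ) + (n.choose (j+1) : ℝ)) * f (j+1)
      = -(∑ j ∈ range (n+1), (-1:ℝ)^j * (n.choose j : ℝ) * f (j+1))
        + ∑ j ∈ range (n+1), (-1:ℝ)^(j+1) * (n.choose (j+1) : ℝ) * f (j+1) := by
    rw [← Finset.sum_neg_distrib, ← Finset.sum_add_distrib]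
    apply Finset.sum_congr rfl; intro j _; ring
  rw [h2]
  have h3 : ∑ j ∈ range (n+1), (-1:ℝ)^(j+1) * (n.choose (j+1) : ℝ) * f (j+1)
      = ∑ j ∈ range (n+1), (-1:ℝ)^j * (n.choose j : ℝ) * f j
        - (-1:ℝ)^0 * (n.choose 0 : ℝ) * f 0 := by
    rw [Finset.sum_range_succ' (fun j => (-1:ℝ)^j * (n.choose j : ℝ) * f j) n]
    have : (-1:ℝ)^(n+1) * (n.choose (n+1) : ℝ) * f (n+1) = 0 := by
      simp [Nat.choose_succ_self]
    rw [Finset.sum_range_succ]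
    rw [this]
    ring
  rw [h3]
  simp only [pow_zero, Nat.choose_zero_right, Nat.cast_one, one_mul]
  have h4 : ∑ j ∈ range (n+1), (-1:ℝ)^j * (n.choose j : ℝ) * (f j - f (j+1))
      = (∑ j ∈ range (n+1), (-1:ℝ)^j * (n.choose j : ℝ) * f j)
        - ∑ j ∈ range (n+1), (-1:ℝ)^j * (n.choose j : ℝ) * f (j+1) := by
    rw [← Finset.sum_sub_distrib]
    exact Finset.sum_congr rfl (by intros; ring)
  rw [h4]; ring

lemma aux_alt_pow (n : ℕ) : ∀ (k : ℕ), k < n → ∀ (c : ℝ),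
    ∑ j ∈ range (n+1), (-1:ℝ)^j * (n.choose j : ℝ) * (c + j)^k = 0 := by
  induction n with
  | zero => intro k hk; omega
  | succ n ih =>
    intro k hk c
    rw [aux_alt_rec n (fun j => (c + j)^k)]
    have key : ∀ j : ℕ, (c + (j:ℝ))^k - (c + ((j+1:ℕ):ℝ))^k
        = -∑ i ∈ range k, (c + j)^i * (k.choose i : ℝ) := by
      intro j
      have hb := add_pow (c + (j:ℝ)) 1 k
      rw [Finset.sum_range_succ] at hb
      simp only [one_pow, mul_one, Nat.choose_self, Nat.cast_one] at hb
      push_cast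
      rw [show c + ((j:ℝ)+1) = c + (j:ℝ) + 1 by ring, hb]
      ring
    simp only [key]
    have swap : ∑ j ∈ range (n+1), (-1:ℝ)^j * (n.choose j : ℝ) *
        (-∑ i ∈ range k, (c + j)^i * (k.choose i : ℝ))
        = ∑ i ∈ range k, -((k.choose i : ℝ) *
            ∑ j ∈ range (n+1), (-1:ℝ)^j * (n.choose j : ℝ) * (c + j)^i) := by
      calc ∑ j ∈ range (n+1), (-1:ℝ)^j * (n.choose j : ℝ) *
            (-∑ i ∈ range k, (c + j)^i * (k.choose i : ℝ))
          = ∑ j ∈ range (n+1), ∑ i ∈ range k,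
              -((-1:ℝ)^j * (n.choose j : ℝ) * ((c + j)^i * (k.choose i : ℝ))) := by
            refine Finset.sum_congr rfl (fun j _ => ?_)
            rw [mul_neg, Finset.mul_sum, ← Finset.sum_neg_distrib]
        _ = ∑ i ∈ range k, ∑ j ∈ range (n+1),
              -((-1:ℝ)^j * (n.choose j : ℝ) * ((c + j)^i * (k.choose i : ℝ))) :=
            Finset.sum_comm
        _ = ∑ i ∈ range k, -((k.choose i : ℝ) *
              ∑ j ∈ range (n+1), (-1:ℝ)^j * (n.choose j : ℝ) * (c + j)^i) := by
            refine Finset.sum_congr rfl (fun i _ => ?_)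
            rw [Finset.mul_sum, ← Finset.sum_neg_distrib]
            exact Finset.sum_congr rfl (by intros; ring)
    rw [swap]
    have hz : ∀ i ∈ range k, -((k.choose i : ℝ) *
        ∑ j ∈ range (n+1), (-1:ℝ)^j * (n.choose j : ℝ) * (c + j)^i) = 0 := by
      intro i hi
      have hik := Finset.mem_range.mp hi
      rw [ih i (by omega) c, mul_zero, neg_zero]
    rw [Finset.sum_congr rfl hz]
    simp

lemma aux_tends1 (a c : ℝ) (hc : 0 < c) :
    Tendsto (fun m : ℕ => ((m:ℝ) + a) / ((m:ℝ) + c)) atTop (nhds 1) := by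
  have h0 : Tendsto (fun m : ℕ => ((m:ℝ) + c)) atTop atTop :=
    tendsto_atTop_add_const_right _ c tendsto_natCast_atTop_atTop
  have h1 : Tendsto (fun m : ℕ => (a - c) / ((m:ℝ) + c)) atTop (nhds 0) :=
    tendsto_const_nhds.div_atTop h0
  have h2 := h1.const_add (1:ℝ)
  rw [add_zero] at h2
  refine h2.congr (fun m => ?_)
  have : (m:ℝ) + c ≠ 0 := by positivity
  field_simp
  ring

lemma aux_summable (b A B D : ℝ) (hb0 : 0 < b) (hb1 : b < 1)
    (hA : 0 < A) (hB : 0 < B) (hD : 0 < D) (k : ℕ) :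
    Summable (fun m : ℕ => ((m:ℝ)+1)^k *
      (b^m * Real.Gamma ((m:ℝ) + A) * Real.Gamma ((m:ℝ) + B) /
        ((m.factorial : ℝ) * Real.Gamma ((m:ℝ) + D)))) := by
  set f : ℕ → ℝ := fun m => ((m:ℝ)+1)^k *
      (b^m * Real.Gamma ((m:ℝ) + A) * Real.Gamma ((m:ℝ) + B) /
        ((m.factorial : ℝ) * Real.Gamma ((m:ℝ) + D))) with hf
  have hpos : ∀ m : ℕ, 0 < f m := by
    intro m
    have g1 : 0 < Real.Gamma ((m:ℝ) + A) := Real.Gamma_pos_of_pos (by positivity)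
    have g2 : 0 < Real.Gamma ((m:ℝ) + B) := Real.Gamma_pos_of_pos (by positivity)
    have g3 : 0 < Real.Gamma ((m:ℝ) + D) := Real.Gamma_pos_of_pos (by positivity)
    have g4 : (0:ℝ) < (m.factorial : ℝ) := by exact_mod_cast m.factorial_pos
    rw [hf]
    positivity
  have hratio : ∀ m : ℕ, f (m+1) / f m
      = (((m:ℝ)+2)/((m:ℝ)+1))^k * (b * (((m:ℝ)+A)/((m:ℝ)+1)) * (((m:ℝ)+B)/((m:ℝ)+D))) := by
    intro m
    have g1 : 0 < Real.Gamma ((m:ℝ) + A) := Real.Gamma_pos_of_pos (by positivity)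
    have g2 : 0 < Real.Gamma ((m:ℝ) + B) := Real.Gamma_pos_of_pos (by positivity)
    have g3 : 0 < Real.Gamma ((m:ℝ) + D) := Real.Gamma_pos_of_pos (by positivity)
    have g4 : (0:ℝ) < (m.factorial : ℝ) := by exact_mod_cast m.factorial_pos
    rw [hf]
    simp only [Nat.factorial_succ, Nat.cast_mul, Nat.cast_add, Nat.cast_one]
    rw [show (m:ℝ)+1+A = ((m:ℝ)+A)+1 from by ring, Real.Gamma_add_one (by positivity : (m:ℝ)+A ≠ 0)]
    rw [show (m:ℝ)+1+B = ((m:ℝ)+B)+1 from by ring, Real.Gamma_add_one (by positivity : (m:ℝ)+B ≠ 0)]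
    rw [show (m:ℝ)+1+D = ((m:ℝ)+D)+1 from by ring, Real.Gamma_add_one (by positivity : (m:ℝ)+D ≠ 0)]
    rw [pow_succ]
    have hm1 : ((m:ℝ)+1) ≠ 0 := by positivity
    have hmD : ((m:ℝ)+D) ≠ 0 := by positivity
    have hp1 : (((m:ℝ)+1)^k) ≠ 0 := by positivity
    rw [div_pow]
    field_simp
    ring
  have hnorm : ∀ m : ℕ, ‖f (m+1)‖ / ‖f m‖
      = (((m:ℝ)+2)/((m:ℝ)+1))^k * (b * (((m:ℝ)+A)/((m:ℝ)+1)) * (((m:ℝ)+B)/((m:ℝ)+D))) := by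
    intro m
    rw [Real.norm_of_nonneg (hpos (m+1)).le, Real.norm_of_nonneg (hpos m).le, hratio m]
  have t1 := (aux_tends1 2 1 one_pos).pow k
  have t2 := aux_tends1 A 1 one_pos
  have t3 := aux_tends1 B D hD
  have T := t1.mul (((tendsto_const_nhds (x := b)).mul t2).mul t3)
  simp only [one_pow, mul_one, one_mul] at T
  refine summable_of_ratio_test_tendsto_lt_one hb1
    (Filter.Eventually.of_forall (fun m => (hpos m).ne')) ?_
  exact T.congr (fun m => (hnorm m).symm)


lemma aux_core (n : ℕ) (b a₁ a₂ δ : ℝ) (hb0 : 0 < b) (hb1 : b < 1)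
    (ha₁ : 0 < a₁) (hδa₂ : 0 < δ + a₂) (hδ1 : |δ| < 1)
    (k : ℕ) (hk : k < n) (c : ℝ) :
    HasSum (fun m : ℕ =>
      (∑ j ∈ Finset.range (n+1), (-1:ℝ)^j * (n.choose j : ℝ) * b^(-(j:ℤ)) *
         (∏ i ∈ Finset.range j, (((m:ℝ) - i) * ((m:ℝ) + δ - i))) *
         ∏ i ∈ Finset.range (n-j), (((m:ℝ) + a₁ + i) * ((m:ℝ) + δ + a₂ + i)))
        * (c + m)^k *
        (b^m * Real.Gamma ((m:ℝ) + a₁) * Real.Gamma ((m:ℝ) + δ + a₂) /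
          ((m.factorial : ℝ) * Real.Gamma ((m:ℝ) + δ + 1)))) 0 := by
  have hδlt := abs_lt.mp hδ1
  have hδ1' : (0:ℝ) < δ + 1 := by linarith [hδlt.1]
  -- the weight after applying the Rodrigues operator n times
  set G : ℕ → ℝ := fun m => b^m * Real.Gamma ((m:ℝ) + a₁ + n) *
      Real.Gamma ((m:ℝ) + δ + a₂ + n) /
      ((m.factorial : ℝ) * Real.Gamma ((m:ℝ) + δ + 1)) with hG
  have hGpos : ∀ m : ℕ, 0 < G m := by
    intro m
    have g1 : 0 < Real.Gamma ((m:ℝ) + a₁ + n) := Real.Gamma_pos_of_pos (by positivity)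
    have g2 : 0 < Real.Gamma ((m:ℝ) + δ + a₂ + n) := Real.Gamma_pos_of_pos (by
      have : (0:ℝ) ≤ (m:ℝ) + (n:ℝ) := by positivity
      linarith)
    have g3 : 0 < Real.Gamma ((m:ℝ) + δ + 1) := Real.Gamma_pos_of_pos (by
      have : (0:ℝ) ≤ (m:ℝ) := by positivity
      linarith)
    have g4 : (0:ℝ) < (m.factorial : ℝ) := by exact_mod_cast m.factorial_pos
    rw [hG]
    positivity
  have hGsum : Summable (fun m : ℕ => ((m:ℝ)+1)^k * G m) := by
    refine (aux_summable b (a₁+n) (δ+a₂+n) (δ+1) hb0 hb1 (by positivity)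
      (by positivity) hδ1' k).congr (fun m => ?_)
    rw [hG]
    rw [show (m:ℝ) + (a₁+n) = (m:ℝ) + a₁ + n from by ring,
        show (m:ℝ) + (δ+a₂+n) = (m:ℝ) + δ + a₂ + n from by ring,
        show (m:ℝ) + (δ+1) = (m:ℝ) + δ + 1 from by ring]
  -- the summands after shifting
  set g : ℕ → ℕ → ℝ := fun j m => (-1:ℝ)^j * (n.choose j : ℝ) * (c + j + m)^k * G m with hg
  have hgsum : ∀ j : ℕ, j ≤ n → Summable (g j) := by
    intro j hj
    refine Summable.of_norm_bounded
      (g := fun m : ℕ => ((n.choose j : ℝ) * (|c| + n + 1)^k) * (((m:ℝ)+1)^k * G m))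
      (hGsum.mul_left _) (fun m => ?_)
    rw [hg]
    simp only [norm_mul, norm_pow, norm_neg, norm_one, one_pow, one_mul]
    have h1 : ‖((n.choose j : ℝ))‖ = (n.choose j : ℝ) := by
      rw [Real.norm_of_nonneg]; positivity
    have h2 : ‖G m‖ = G m := Real.norm_of_nonneg (hGpos m).le
    rw [h1, h2]
    have h3 : ‖c + (j:ℝ) + (m:ℝ)‖ ≤ (|c| + n + 1) * ((m:ℝ)+1) := by
      have hjn : (j:ℝ) ≤ (n:ℝ) := by exact_mod_cast hj
      have hm0 : (0:ℝ) ≤ (m:ℝ) := by positivity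
      have habs : ‖c + (j:ℝ) + (m:ℝ)‖ ≤ |c| + (j:ℝ) + (m:ℝ) := by
        rw [Real.norm_eq_abs]
        calc |c + (j:ℝ) + (m:ℝ)| ≤ |c + (j:ℝ)| + |(m:ℝ)| := abs_add_le _ _
          _ ≤ (|c| + |(j:ℝ)|) + |(m:ℝ)| := by gcongr; exact abs_add_le _ _
          _ = |c| + (j:ℝ) + (m:ℝ) := by rw [abs_of_nonneg (by positivity : (0:ℝ) ≤ (j:ℝ)),
              abs_of_nonneg hm0]
      nlinarith [abs_nonneg c]
    have hGm := (hGpos m).le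
    have hcj : (0:ℝ) ≤ (n.choose j : ℝ) := by positivity
    calc (n.choose j : ℝ) * ‖c + (j:ℝ) + (m:ℝ)‖^k * G m
        ≤ (n.choose j : ℝ) * ((|c| + n + 1) * ((m:ℝ)+1))^k * G m := by
          gcongr
      _ = (n.choose j : ℝ) * (|c| + n + 1)^k * (((m:ℝ)+1)^k * G m) := by rw [mul_pow]; ring
  -- shifted summands with zero padding
  classical
  set f : ℕ → ℕ → ℝ := fun j m => if j ≤ m then g j (m - j) else 0 with hfdef
  have hfsum : ∀ j : ℕ, j ≤ n → HasSum (f j) (∑' m, g j m) := by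
    intro j hj
    have hinj : Function.Injective (fun m : ℕ => m + j) := fun a b h => Nat.add_right_cancel h
    have hvan : ∀ x : ℕ, x ∉ Set.range (fun m : ℕ => m + j) → f j x = 0 := by
      intro x hx
      have : ¬ j ≤ x := by
        intro hjx
        refine hx ⟨x - j, ?_⟩
        show x - j + j = x
        omega
      simp [hfdef, this]
    have hcomp : (f j) ∘ (fun m : ℕ => m + j) = g j := by
      funext m
      simp [hfdef, Nat.le_add_left, Nat.add_sub_cancel]
    have := (hinj.hasSum_iff hvan).mp (by
      rw [hcomp]; exact ((hgsum j hj).hasSum))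
    exact this
  have Hsum : HasSum (fun m => ∑ j ∈ range (n+1), f j m)
      (∑ j ∈ range (n+1), ∑' m, g j m) :=
    hasSum_sum (fun j hj => hfsum j (Nat.lt_succ_iff.mp (mem_range.mp hj)))
  -- the total is zero by the finite-difference identity
  have htot : (∑ j ∈ range (n+1), ∑' m, g j m) = 0 := by
    rw [← Summable.tsum_finsetSum (fun j hj => hgsum j (Nat.lt_succ_iff.mp (mem_range.mp hj)))]
    have hzero : ∀ m : ℕ, (∑ j ∈ range (n+1), g j m) = 0 := by
      intro m
      have : ∑ j ∈ range (n+1), g j m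
          = (∑ j ∈ range (n+1), (-1:ℝ)^j * (n.choose j : ℝ) * ((c + m) + j)^k) * G m := by
        rw [Finset.sum_mul]
        refine Finset.sum_congr rfl (fun j _ => ?_)
        rw [hg]
        simp only
        rw [show c + (j:ℝ) + (m:ℝ) = (c + (m:ℝ)) + (j:ℝ) from by ring]
      rw [this, aux_alt_pow n k hk (c + m), zero_mul]
    rw [tsum_congr hzero]
    exact tsum_zero
  rw [htot] at Hsum
  -- identify the pointwise sums
  refine Hsum.congr_fun (fun m => ?_)
  rw [Finset.sum_mul, Finset.sum_mul]
  refine Finset.sum_congr rfl (fun j hj => ?_)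
  have hjn : j ≤ n := Nat.lt_succ_iff.mp (mem_range.mp hj)
  rw [hfdef]
  simp only
  by_cases hjm : j ≤ m
  · rw [if_pos hjm, hg]
    simp only
    have hcast : ((m - j : ℕ) : ℝ) = (m:ℝ) - j := Nat.cast_sub hjm
    have hcast2 : ((n - j : ℕ) : ℝ) = (n:ℝ) - j := Nat.cast_sub hjn
    have hck : c + (j:ℝ) + ((m - j : ℕ) : ℝ) = c + (m:ℝ) := by rw [hcast]; ring
    rw [hck]
    have hkey : b^(-(j:ℤ)) * (∏ i ∈ range j, (((m:ℝ) - i) * ((m:ℝ) + δ - i))) *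
        (∏ i ∈ range (n-j), (((m:ℝ) + a₁ + i) * ((m:ℝ) + δ + a₂ + i))) *
        (b^m * Real.Gamma ((m:ℝ) + a₁) * Real.Gamma ((m:ℝ) + δ + a₂) /
          ((m.factorial : ℝ) * Real.Gamma ((m:ℝ) + δ + 1))) = G (m - j) := by
      have hΓa : 0 < Real.Gamma ((m:ℝ) + a₁) := Real.Gamma_pos_of_pos (by positivity)
      have hΓb : 0 < Real.Gamma ((m:ℝ) + δ + a₂) := Real.Gamma_pos_of_pos (by
        have : (0:ℝ) ≤ (m:ℝ) := by positivity
        linarith)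
      have hΓd' : 0 < Real.Gamma (((m - j : ℕ):ℝ) + δ + 1) := Real.Gamma_pos_of_pos (by
        have : (0:ℝ) ≤ ((m - j : ℕ):ℝ) := by positivity
        linarith)
      have hfacmj : (0:ℝ) < ((m-j).factorial : ℝ) := by exact_mod_cast (m-j).factorial_pos
      have hfm : (0:ℝ) < (m.factorial : ℝ) := by exact_mod_cast m.factorial_pos
      have hδfac : ∀ i : ℕ, i < j → (0:ℝ) < (m:ℝ) + δ - i := by
        intro i hi
        have : (i:ℝ) + 1 ≤ (m:ℝ) := by exact_mod_cast Nat.succ_le_of_lt (lt_of_lt_of_le hi hjm)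
        linarith [hδlt.1]
      have hPδ : 0 < ∏ i ∈ range j, ((m:ℝ) + δ - i) :=
        Finset.prod_pos (fun i hi => hδfac i (mem_range.mp hi))
      have hPm : 0 < ∏ i ∈ range j, ((m:ℝ) - i) := by
        refine Finset.prod_pos (fun i hi => ?_)
        have hi' := mem_range.mp hi
        have : (i:ℝ) + 1 ≤ (m:ℝ) := by exact_mod_cast Nat.succ_le_of_lt (lt_of_lt_of_le hi' hjm)
        linarith
      have F1 : Real.Gamma (((m-j:ℕ):ℝ) + a₁ + n)
          = Real.Gamma ((m:ℝ) + a₁) * ∏ i ∈ range (n-j), ((m:ℝ) + a₁ + i) := by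
        have h := aux_Gamma_add_nat ((m:ℝ) + a₁) (n-j) (fun i _ => by positivity)
        rw [show ((m-j:ℕ):ℝ) + a₁ + n = (m:ℝ) + a₁ + ((n-j:ℕ):ℝ) from by
          rw [hcast, hcast2]; ring]
        exact h
      have F2 : Real.Gamma (((m-j:ℕ):ℝ) + δ + a₂ + n)
          = Real.Gamma ((m:ℝ) + δ + a₂) * ∏ i ∈ range (n-j), ((m:ℝ) + δ + a₂ + i) := by
        have h := aux_Gamma_add_nat ((m:ℝ) + δ + a₂) (n-j) (fun i _ => by
          have : (0:ℝ) ≤ (m:ℝ) + i := by positivity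
          intro hzero
          nlinarith)
        rw [show ((m-j:ℕ):ℝ) + δ + a₂ + n = (m:ℝ) + δ + a₂ + ((n-j:ℕ):ℝ) from by
          rw [hcast, hcast2]; ring]
        exact h
      have F3 : Real.Gamma ((m:ℝ) + δ + 1)
          = Real.Gamma (((m-j:ℕ):ℝ) + δ + 1) * ∏ i ∈ range j, ((m:ℝ) + δ - i) := by
        have h := aux_Gamma_sub_nat ((m:ℝ) + δ) j (fun i hi => (hδfac i hi).ne')
        rw [show (m:ℝ) + δ + 1 - j = ((m-j:ℕ):ℝ) + δ + 1 from by rw [hcast]; ring] at h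
        exact h
      have F4 : (∏ i ∈ range j, ((m:ℝ) - i)) * (((m-j).factorial : ℝ))
          = (m.factorial : ℝ) := aux_fact_prod m j hjm
      have F5 : b^m = b^(m-j) * b^j := by
        rw [← pow_add]
        congr 1
        omega
      have F6 : b^(-(j:ℤ)) = (b^j)⁻¹ := by
        rw [zpow_neg, zpow_natCast]
      rw [hG]
      simp only
      rw [Finset.prod_mul_distrib, Finset.prod_mul_distrib, F1, F2, F3, ← F4, F5, F6]
      have hbj : b^j ≠ 0 := by positivity
      rw [← mul_div_assoc, div_eq_div_iff (by positivity) (by positivity)]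
      field_simp
    rw [← hkey]
    ring
  · rw [if_neg hjm]
    have hmem : m ∈ range j := mem_range.mpr (by omega)
    have hzero : (∏ i ∈ range j, (((m:ℝ) - i) * ((m:ℝ) + δ - i))) = 0 :=
      Finset.prod_eq_zero hmem (by rw [sub_self, zero_mul])
    rw [hzero]
    ring

lemma aux_poly (n : ℕ) (b α₁ α₂ γ₁ γ₂ : ℝ) (hb0 : 0 < b) (hb1 : b < 1) :
    ∃ p : Polynomial ℝ, p.degree = (2 * n : ℕ) ∧ ∀ x : ℝ,
      (∑ j ∈ Finset.range (n + 1),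
        (-1 : ℝ) ^ j * (n.choose j : ℝ) * b ^ (-(j : ℤ)) *
          (∏ i ∈ Finset.range j, ((x - γ₁ - (i : ℝ)) * (x - γ₂ - (i : ℝ)))) *
          ∏ i ∈ Finset.range (n - j), ((x - γ₁ + α₁ + (i : ℝ)) * (x - γ₂ + α₂ + (i : ℝ))))
        = p.eval x := by
  set M : ℕ → Polynomial ℝ := fun j =>
    (∏ i ∈ range j, ((X - C (γ₁ + i)) * (X - C (γ₂ + i)))) *
      ∏ i ∈ range (n - j), ((X + C (α₁ - γ₁ + i)) * (X + C (α₂ - γ₂ + i))) with hM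
  have hpairs1 : ∀ (a c : ℝ), ((X - C a) * (X - C c) : Polynomial ℝ).Monic :=
    fun a c => (monic_X_sub_C a).mul (monic_X_sub_C c)
  have hpairs2 : ∀ (a c : ℝ), ((X + C a) * (X + C c) : Polynomial ℝ).Monic :=
    fun a c => (monic_X_add_C a).mul (monic_X_add_C c)
  have hMmonic : ∀ j, (M j).Monic := by
    intro j
    exact ((monic_prod_of_monic _ _ (fun i _ => hpairs1 _ _)).mul
      (monic_prod_of_monic _ _ (fun i _ => hpairs2 _ _)))
  have hMdeg : ∀ j, j ≤ n → (M j).natDegree = 2 * n := by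
    intro j hj
    rw [hM]
    simp only
    have hm1 : (∏ i ∈ range j, ((X - C (γ₁ + (i:ℝ))) * (X - C (γ₂ + (i:ℝ))))).Monic :=
      monic_prod_of_monic _ (fun i : ℕ => (X - C (γ₁ + (i:ℝ))) * (X - C (γ₂ + (i:ℝ))))
        (fun i _ => hpairs1 _ _)
    have hm2 : (∏ i ∈ range (n-j),
        ((X + C (α₁ - γ₁ + (i:ℝ))) * (X + C (α₂ - γ₂ + (i:ℝ))))).Monic :=
      monic_prod_of_monic _ (fun i : ℕ => (X + C (α₁ - γ₁ + (i:ℝ))) * (X + C (α₂ - γ₂ + (i:ℝ))))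
        (fun i _ => hpairs2 _ _)
    rw [hm1.natDegree_mul hm2]
    rw [natDegree_prod (s := range j) (f := fun i : ℕ => (X - C (γ₁ + (i:ℝ))) * (X - C (γ₂ + (i:ℝ))))
          (fun i _ => (hpairs1 (γ₁+(i:ℝ)) (γ₂+(i:ℝ))).ne_zero),
        natDegree_prod (s := range (n-j)) (f := fun i : ℕ => (X + C (α₁ - γ₁ + (i:ℝ))) * (X + C (α₂ - γ₂ + (i:ℝ))))
          (fun i _ => (hpairs2 (α₁-γ₁+(i:ℝ)) (α₂-γ₂+(i:ℝ))).ne_zero)]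
    have h2 : ∀ (a c : ℝ), ((X - C a) * (X - C c) : Polynomial ℝ).natDegree = 2 := by
      intro a c
      rw [(monic_X_sub_C a).natDegree_mul (monic_X_sub_C c)]; simp [natDegree_X_sub_C]
    have h2' : ∀ (a c : ℝ), ((X + C a) * (X + C c) : Polynomial ℝ).natDegree = 2 := by
      intro a c
      rw [(monic_X_add_C a).natDegree_mul (monic_X_add_C c)]; simp [natDegree_X_add_C]
    simp only [h2, h2', Finset.sum_const, card_range, smul_eq_mul]
    omega
  set p : Polynomial ℝ := ∑ j ∈ range (n+1),
    C ((-1:ℝ)^j * (n.choose j : ℝ) * b ^ (-(j:ℤ))) * M j with hp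
  have hcoeff : p.coeff (2*n) = (1 - b⁻¹)^n := by
    rw [hp, Polynomial.finset_sum_coeff]
    have : ∀ j ∈ range (n+1), (C ((-1:ℝ)^j * (n.choose j : ℝ) * b ^ (-(j:ℤ))) * M j).coeff (2*n)
        = (-1:ℝ)^j * (n.choose j : ℝ) * b ^ (-(j:ℤ)) := by
      intro j hj
      rw [Polynomial.coeff_C_mul]
      have := (hMmonic j).coeff_natDegree
      rw [hMdeg j (Nat.lt_succ_iff.mp (mem_range.mp hj))] at this
      rw [this, mul_one]
    rw [Finset.sum_congr rfl this]
    have hb := add_pow (-b⁻¹) (1:ℝ) n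
    rw [show -b⁻¹ + 1 = 1 - b⁻¹ from by ring] at hb
    rw [hb]
    refine Finset.sum_congr rfl (fun j hj => ?_)
    rw [show b ^ (-(j:ℤ)) = (b⁻¹)^j from by rw [zpow_neg, zpow_natCast, inv_pow]]
    rw [neg_pow]
    ring
  have hcne : (1 - b⁻¹)^n ≠ 0 := by
    have h1 : 1 < b⁻¹ := (one_lt_inv₀ hb0).mpr hb1
    have : 1 - b⁻¹ ≠ 0 := by linarith
    exact pow_ne_zero n this
  have hdegle : p.natDegree ≤ 2*n := by
    rw [hp]
    refine natDegree_sum_le_of_forall_le _ _ (fun j hj => ?_)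
    refine le_trans (natDegree_C_mul_le _ _) ?_
    rw [hMdeg j (Nat.lt_succ_iff.mp (mem_range.mp hj))]
  refine ⟨p, ?_, ?_⟩
  · refine degree_eq_of_le_of_coeff_ne_zero ?_ (by rw [hcoeff]; exact hcne)
    exact le_trans degree_le_natDegree (by exact_mod_cast hdegle)
  · intro x
    rw [hp]
    rw [Polynomial.eval_finset_sum]
    refine Finset.sum_congr rfl (fun j hj => ?_)
    rw [Polynomial.eval_mul, Polynomial.eval_C, Polynomial.eval_mul,
      Polynomial.eval_prod, Polynomial.eval_prod]
    rw [mul_assoc]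
    congr 1
    congr 1
    · refine Finset.prod_congr rfl (fun i _ => ?_)
      simp only [Polynomial.eval_mul, Polynomial.eval_sub, Polynomial.eval_X, Polynomial.eval_C]
      ring
    · refine Finset.prod_congr rfl (fun i _ => ?_)
      simp only [Polynomial.eval_mul, Polynomial.eval_add, Polynomial.eval_X, Polynomial.eval_C]
      ring

/-- The paper's Meixner–Sorokin family: the weights `W_j` on the interlacing shifted
lattices `γ_j + ℤ₊` are positive, the Rodrigues polynomial `P` has degree exactly `2n`,
and `P` is orthogonal to `x^k`, `k < n`, with respect to both discrete measures. -/
theorem stmt_10 (n : ℕ) (b α₁ α₂ : ℝ) (hb0 : 0 < b) (hb1 : b < 1)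
    (hα₁ : 0 < α₁) (hα₂ : 0 < α₂) (γ₁ γ₂ : ℝ)
    (hγ0 : 0 < |γ₁ - γ₂|) (hγ1 : |γ₁ - γ₂| < 1)
    (hγα₂ : -α₂ < γ₁ - γ₂) (hγα₁ : γ₁ - γ₂ < α₁) (W₁ W₂ : ℕ → ℝ)
    (hW₁ : ∀ m : ℕ, W₁ m = b ^ m * Real.Gamma ((m : ℝ) + α₁) *
      Real.Gamma ((m : ℝ) + γ₁ - γ₂ + α₂) /
        ((m.factorial : ℝ) * Real.Gamma ((m : ℝ) + γ₁ - γ₂ + 1)))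
    (hW₂ : ∀ m : ℕ, W₂ m = b ^ m * Real.Gamma ((m : ℝ) + γ₂ - γ₁ + α₁) *
      Real.Gamma ((m : ℝ) + α₂) /
        ((m.factorial : ℝ) * Real.Gamma ((m : ℝ) + γ₂ - γ₁ + 1)))
    (P : ℝ → ℝ)
    (hP : ∀ x : ℝ, P x = ∑ j ∈ Finset.range (n + 1),
      (-1 : ℝ) ^ j * (n.choose j : ℝ) * b ^ (-(j : ℤ)) *
        (∏ i ∈ Finset.range j, ((x - γ₁ - (i : ℝ)) * (x - γ₂ - (i : ℝ)))) *
        ∏ i ∈ Finset.range (n - j), ((x - γ₁ + α₁ + (i : ℝ)) * (x - γ₂ + α₂ + (i : ℝ)))) :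
    (∀ m : ℕ, 0 < W₁ m ∧ 0 < W₂ m) ∧
    (∃ p : Polynomial ℝ, p.degree = (2 * n : ℕ) ∧ ∀ x : ℝ, P x = p.eval x) ∧
    (∀ k : ℕ, k < n →
      HasSum (fun m : ℕ => P (γ₁ + m) * (γ₁ + m) ^ k * W₁ m) 0 ∧
      HasSum (fun m : ℕ => P (γ₂ + m) * (γ₂ + m) ^ k * W₂ m) 0) := by
  have hγlt := abs_lt.mp hγ1
  refine ⟨?_, ?_, ?_⟩
  · intro m
    have hfm : (0:ℝ) < (m.factorial : ℝ) := by exact_mod_cast m.factorial_pos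
    have hm0 : (0:ℝ) ≤ (m:ℝ) := by positivity
    constructor
    · rw [hW₁]
      have g1 : 0 < Real.Gamma ((m:ℝ) + α₁) := Real.Gamma_pos_of_pos (by positivity)
      have g2 : 0 < Real.Gamma ((m:ℝ) + γ₁ - γ₂ + α₂) :=
        Real.Gamma_pos_of_pos (by linarith)
      have g3 : 0 < Real.Gamma ((m:ℝ) + γ₁ - γ₂ + 1) :=
        Real.Gamma_pos_of_pos (by linarith [hγlt.1])
      have : (0:ℝ) < b ^ m := by positivity
      exact div_pos (by positivity) (by positivity)
    · rw [hW₂]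
      have g1 : 0 < Real.Gamma ((m:ℝ) + γ₂ - γ₁ + α₁) :=
        Real.Gamma_pos_of_pos (by linarith)
      have g2 : 0 < Real.Gamma ((m:ℝ) + α₂) := Real.Gamma_pos_of_pos (by positivity)
      have g3 : 0 < Real.Gamma ((m:ℝ) + γ₂ - γ₁ + 1) :=
        Real.Gamma_pos_of_pos (by linarith [hγlt.2])
      exact div_pos (by positivity) (by positivity)
  · obtain ⟨p, hd, he⟩ := aux_poly n b α₁ α₂ γ₁ γ₂ hb0 hb1
    exact ⟨p, hd, fun x => by rw [hP x]; exact he x⟩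
  · intro k hk
    constructor
    · have H := aux_core n b α₁ α₂ (γ₁ - γ₂) hb0 hb1 hα₁ (by linarith) hγ1 k hk γ₁
      refine H.congr_fun (fun m => ?_)
      rw [hP, hW₁]
      have hsum : (∑ j ∈ Finset.range (n + 1),
          (-1 : ℝ) ^ j * (n.choose j : ℝ) * b ^ (-(j : ℤ)) *
            (∏ i ∈ Finset.range j, ((γ₁ + (m:ℝ) - γ₁ - (i : ℝ)) * (γ₁ + (m:ℝ) - γ₂ - (i : ℝ)))) *
            ∏ i ∈ Finset.range (n - j), ((γ₁ + (m:ℝ) - γ₁ + α₁ + (i : ℝ)) * (γ₁ + (m:ℝ) - γ₂ + α₂ + (i : ℝ))))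
          = ∑ j ∈ Finset.range (n+1), (-1:ℝ)^j * (n.choose j : ℝ) * b^(-(j:ℤ)) *
            (∏ i ∈ Finset.range j, (((m:ℝ) - i) * ((m:ℝ) + (γ₁ - γ₂) - i))) *
            ∏ i ∈ Finset.range (n-j), (((m:ℝ) + α₁ + i) * ((m:ℝ) + (γ₁ - γ₂) + α₂ + i)) := by
        refine Finset.sum_congr rfl (fun j _ => ?_)
        rw [Finset.prod_congr rfl (fun (i : ℕ) _ => show
            (γ₁ + (m:ℝ) - γ₁ - (i : ℝ)) * (γ₁ + (m:ℝ) - γ₂ - (i : ℝ))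
              = ((m:ℝ) - i) * ((m:ℝ) + (γ₁ - γ₂) - i) from by ring),
          Finset.prod_congr rfl (fun (i : ℕ) _ => show
            (γ₁ + (m:ℝ) - γ₁ + α₁ + (i : ℝ)) * (γ₁ + (m:ℝ) - γ₂ + α₂ + (i : ℝ))
              = ((m:ℝ) + α₁ + i) * ((m:ℝ) + (γ₁ - γ₂) + α₂ + i) from by ring)]
      rw [hsum,
        show Real.Gamma ((m:ℝ) + γ₁ - γ₂ + α₂) = Real.Gamma ((m:ℝ) + (γ₁ - γ₂) + α₂) from
          congrArg Real.Gamma (by ring),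
        show Real.Gamma ((m:ℝ) + γ₁ - γ₂ + 1) = Real.Gamma ((m:ℝ) + (γ₁ - γ₂) + 1) from
          congrArg Real.Gamma (by ring)]
    · have H := aux_core n b α₂ α₁ (γ₂ - γ₁) hb0 hb1 hα₂ (by linarith)
        (by rwa [abs_sub_comm]) k hk γ₂
      refine H.congr_fun (fun m => ?_)
      rw [hP, hW₂]
      have hsum : (∑ j ∈ Finset.range (n + 1),
          (-1 : ℝ) ^ j * (n.choose j : ℝ) * b ^ (-(j : ℤ)) *
            (∏ i ∈ Finset.range j, ((γ₂ + (m:ℝ) - γ₁ - (i : ℝ)) * (γ₂ + (m:ℝ) - γ₂ - (i : ℝ)))) *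
            ∏ i ∈ Finset.range (n - j), ((γ₂ + (m:ℝ) - γ₁ + α₁ + (i : ℝ)) * (γ₂ + (m:ℝ) - γ₂ + α₂ + (i : ℝ))))
          = ∑ j ∈ Finset.range (n+1), (-1:ℝ)^j * (n.choose j : ℝ) * b^(-(j:ℤ)) *
            (∏ i ∈ Finset.range j, (((m:ℝ) - i) * ((m:ℝ) + (γ₂ - γ₁) - i))) *
            ∏ i ∈ Finset.range (n-j), (((m:ℝ) + α₂ + i) * ((m:ℝ) + (γ₂ - γ₁) + α₁ + i)) := by
        refine Finset.sum_congr rfl (fun j _ => ?_)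
        rw [Finset.prod_congr rfl (fun (i : ℕ) _ => show
            (γ₂ + (m:ℝ) - γ₁ - (i : ℝ)) * (γ₂ + (m:ℝ) - γ₂ - (i : ℝ))
              = ((m:ℝ) - i) * ((m:ℝ) + (γ₂ - γ₁) - i) from by ring),
          Finset.prod_congr rfl (fun (i : ℕ) _ => show
            (γ₂ + (m:ℝ) - γ₁ + α₁ + (i : ℝ)) * (γ₂ + (m:ℝ) - γ₂ + α₂ + (i : ℝ))
              = ((m:ℝ) + α₂ + i) * ((m:ℝ) + (γ₂ - γ₁) + α₁ + i) from by ring)]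
      rw [hsum,
        show Real.Gamma ((m:ℝ) + γ₂ - γ₁ + α₁) = Real.Gamma ((m:ℝ) + (γ₂ - γ₁) + α₁) from
          congrArg Real.Gamma (by ring),
        show Real.Gamma ((m:ℝ) + γ₂ - γ₁ + 1) = Real.Gamma ((m:ℝ) + (γ₂ - γ₁) + 1) from
          congrArg Real.Gamma (by ring)]
      ring
end

section
/- Fix b > 0 with b ≠ 1, natural numbers N_1, N_2, n with n ≤ N_1, and γ_1, γ_2 ∈ ℝ such that either (N_1 = N_2 and 0 < |γ_1 − γ_2| < 1) or (N_2 = N_1 + 1 and 0 < γ_1 − γ_2 < 1). For j ∈ {1,2} let j' denote the other index and define W_j(m) = b^m / (m! · (N_j − m)! · Γ(m + γ_j − γ_{j'} + 1) · Γ(N_{j'} − m − γ_j + γ_{j'} + 1)) for 0 ≤ m ≤ N_j, and define P : ℝ → ℝ by P(x) = Σ_{j=0}^{n} (−1)^j C(n,j) b^(−j) · Π_{i=0}^{j−1} [(x − γ_1 − i)(x − γ_2 − i)] · Π_{i=0}^{n−j−1} [(N_1 − x + γ_1 − i)(N_2 − x + γ_2 − i)]. Then: (i) W_j(m) > 0 for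 all j ∈ {1,2} and 0 ≤ m ≤ N_j; (ii) P is the evaluation of a real polynomial of degree exactly 2n; (iii) for every j ∈ {1,2} and every natural number k < n, Σ_{m=0}^{N_j} P(γ_j + m) · (γ_j + m)^k · W_j(m) = 0. -/
open Finset Polynomial

private lemma gamma_int_nonpos {t : ℤ} (ht : t ≤ 0) : Real.Gamma (t : ℝ) = 0 := by
  obtain ⟨n, hn⟩ : ∃ n : ℕ, t = -(n : ℤ) := ⟨(-t).toNat, by omega⟩
  subst hn
  rw [show (((-(n : ℤ)) : ℤ) : ℝ) = -(n : ℝ) by push_cast; ring]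
  exact Real.Gamma_neg_nat_eq_zero n

private lemma gamma_fall (z : ℝ) (j : ℕ) (h : ∀ i : ℕ, i < j → z - i ≠ 0) :
    Real.Gamma (z + 1) = Real.Gamma (z - j + 1) * ∏ i ∈ range j, (z - i) := by
  induction j with
  | zero => simp
  | succ j ih =>
    rw [prod_range_succ, ih (fun i hi => h i (by omega))]
    rw [show z - (j + 1 : ℕ) + 1 = z - j by push_cast; ring]
    rw [Real.Gamma_add_one (h j (by omega))]
    ring

private lemma gamma_ratio (z : ℝ) (j : ℕ) (h : ∀ i : ℕ, i < j → z - i ≠ 0)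
    (hz : Real.Gamma (z + 1) ≠ 0) :
    (∏ i ∈ range j, (z - i)) / Real.Gamma (z + 1) = 1 / Real.Gamma (z - j + 1) := by
  have hf := gamma_fall z j h
  have hprod : (∏ i ∈ range j, (z - i)) ≠ 0 :=
    prod_ne_zero_iff.mpr fun i hi => h i (mem_range.mp hi)
  have hg : Real.Gamma (z - j + 1) ≠ 0 := by
    intro h0; rw [h0, zero_mul] at hf; exact hz hf
  rw [hf]; field_simp

private lemma gamma_ratio_nat (m j : ℕ) :
    (∏ i ∈ range j, ((m : ℝ) - i)) / Real.Gamma ((m : ℝ) + 1)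
      = 1 / Real.Gamma ((m : ℝ) - j + 1) := by
  by_cases hjm : j ≤ m
  · apply gamma_ratio
    · intro i hi
      have : (i : ℝ) < m := by exact_mod_cast lt_of_lt_of_le hi hjm
      intro h0; rw [sub_eq_zero] at h0; exact this.ne h0.symm
    · rw [Real.Gamma_nat_eq_factorial]; positivity
  · push_neg at hjm
    have h1 : (∏ i ∈ range j, ((m : ℝ) - i)) = 0 :=
      prod_eq_zero (mem_range.mpr hjm) (by simp)
    have h2 : Real.Gamma ((m : ℝ) - j + 1) = 0 := by
      rw [show (m : ℝ) - j + 1 = ((m - j + 1 : ℤ) : ℝ) by push_cast; ring]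
      exact gamma_int_nonpos (by omega)
    rw [h1, h2]; simp

private lemma diff_vanish : ∀ (n : ℕ) (q : Polynomial ℝ), q.degree < (n : WithBot ℕ) → ∀ x : ℝ,
    ∑ j ∈ range (n + 1), (-1 : ℝ) ^ j * (n.choose j : ℝ) * q.eval (x + j) = 0 := by
  intro n
  induction n with
  | zero =>
    intro q hq x
    have : q = 0 := Polynomial.degree_eq_bot.mp (Nat.WithBot.lt_zero_iff.mp hq)
    subst this; simp
  | succ n ih =>
    intro q hq x
    by_cases hq0 : q = 0
    · subst hq0; simp
    -- the shifted polynomial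
    set q1 : Polynomial ℝ := q.comp (X + C 1) with hq1def
    have hlc : q1.leadingCoeff = q.leadingCoeff := by
      rw [hq1def, Polynomial.leadingCoeff_comp
        (by rw [Polynomial.natDegree_X_add_C]; exact one_ne_zero),
        (Polynomial.monic_X_add_C (1:ℝ)).leadingCoeff, one_pow, mul_one]
    have hq10 : q1 ≠ 0 := by
      intro h0
      apply hq0
      rw [← Polynomial.leadingCoeff_eq_zero, ← hlc, h0, Polynomial.leadingCoeff_zero]
    have hnd : q1.natDegree = q.natDegree := by
      rw [hq1def, Polynomial.natDegree_comp, Polynomial.natDegree_X_add_C, mul_one]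
    have hdeg : q1.degree = q.degree := by
      rw [Polynomial.degree_eq_natDegree hq10, Polynomial.degree_eq_natDegree hq0, hnd]
    set r : Polynomial ℝ := q - q1 with hrdef
    have hr : r.degree < (n : WithBot ℕ) := by
      have h1 : r.degree < q.degree := Polynomial.degree_sub_lt hdeg.symm hq0 hlc.symm
      have h2 : q.degree ≤ (n : WithBot ℕ) := by
        have := Polynomial.degree_eq_natDegree hq0
        rw [this] at hq ⊢
        exact_mod_cast Nat.lt_succ_iff.mp (by exact_mod_cast hq)
      exact lt_of_lt_of_le h1 h2
    have hre : ∀ y : ℝ, r.eval y = q.eval y - q.eval (y + 1) := by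
      intro y
      simp [hrdef, hq1def, Polynomial.eval_comp]
    have key : ∑ j ∈ range (n + 2), (-1 : ℝ) ^ j * ((n+1).choose j : ℝ) * q.eval (x + j)
        = ∑ j ∈ range (n + 1), (-1 : ℝ) ^ j * (n.choose j : ℝ) * q.eval (x + j)
          - ∑ j ∈ range (n + 1), (-1 : ℝ) ^ j * (n.choose j : ℝ) * q.eval ((x + 1) + j) := by
      rw [Finset.sum_range_succ' (fun j => (-1 : ℝ) ^ j * ((n+1).choose j : ℝ) * q.eval (x + j))]
      have e1 : ∀ j, ((n+1).choose (j+1) : ℝ) = (n.choose j : ℝ) + (n.choose (j+1) : ℝ) := by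
        intro j; exact_mod_cast congrArg (Nat.cast (R := ℝ)) (Nat.choose_succ_succ n j)
      have split : ∑ j ∈ range (n + 1), (-1 : ℝ) ^ (j+1) * ((n+1).choose (j+1) : ℝ) * q.eval (x + (j+1))
          = (∑ j ∈ range (n + 1), (-1 : ℝ) ^ (j+1) * (n.choose j : ℝ) * q.eval (x + (j+1)))
            + ∑ j ∈ range (n + 1), (-1 : ℝ) ^ (j+1) * (n.choose (j+1) : ℝ) * q.eval (x + (j+1)) := by
        rw [← Finset.sum_add_distrib]
        refine Finset.sum_congr rfl fun j _ => ?_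
        rw [e1]; ring
      have s2 : ∑ j ∈ range (n + 1), (-1 : ℝ) ^ (j+1) * (n.choose (j+1) : ℝ) * q.eval (x + (j+1))
          = ∑ j ∈ range (n + 2), (-1 : ℝ) ^ j * (n.choose j : ℝ) * q.eval (x + j)
            - (-1 : ℝ) ^ 0 * (n.choose 0 : ℝ) * q.eval (x + 0) := by
        rw [Finset.sum_range_succ' (fun j => (-1 : ℝ) ^ j * (n.choose j : ℝ) * q.eval (x + j))]
        push_cast
        ring
      have s3 : ∑ j ∈ range (n + 2), (-1 : ℝ) ^ j * (n.choose j : ℝ) * q.eval (x + j)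
          = ∑ j ∈ range (n + 1), (-1 : ℝ) ^ j * (n.choose j : ℝ) * q.eval (x + j) := by
        rw [Finset.sum_range_succ, Nat.choose_succ_self]
        simp
      have s4 : ∑ j ∈ range (n + 1), (-1 : ℝ) ^ (j+1) * (n.choose j : ℝ) * q.eval (x + (j+1))
          = - ∑ j ∈ range (n + 1), (-1 : ℝ) ^ j * (n.choose j : ℝ) * q.eval ((x + 1) + j) := by
        rw [← Finset.sum_neg_distrib]
        refine Finset.sum_congr rfl fun j _ => ?_
        rw [show x + (↑j + 1) = (x + 1) + ↑j by ring]
        ring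
      push_cast at split s2 s3 s4 ⊢
      rw [split, s2, s3, s4]
      push_cast
      simp only [Nat.choose_zero_right, Nat.cast_one]
      ring
    have := ih r hr x
    have hsum : ∑ j ∈ range (n + 1), (-1 : ℝ) ^ j * (n.choose j : ℝ) * q.eval (x + j)
          - ∑ j ∈ range (n + 1), (-1 : ℝ) ^ j * (n.choose j : ℝ) * q.eval ((x + 1) + j)
        = ∑ j ∈ range (n + 1), (-1 : ℝ) ^ j * (n.choose j : ℝ) * r.eval (x + j) := by
      rw [← Finset.sum_sub_distrib]
      refine Finset.sum_congr rfl fun j _ => ?_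
      rw [hre, show x + ↑j + 1 = (x + 1) + ↑j by ring]
      ring
    calc ∑ j ∈ range (n + 1 + 1), (-1 : ℝ) ^ j * ((n+1).choose j : ℝ) * q.eval (x + j)
        = _ := key
      _ = 0 := by rw [hsum, this]

private lemma ortho (b : ℝ) (hb0 : 0 < b) (M₁ M₂ n : ℕ) (hn : n ≤ M₁) (δ : ℝ)
    (hδint : ∀ t : ℤ, δ ≠ (t : ℝ)) (hδ1 : -1 < δ)
    (hpos : 0 < (M₂ : ℝ) - M₁ - δ + 1)
    (k : ℕ) (hk : k < n) (γ : ℝ) :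
    ∑ m ∈ range (M₁ + 1),
      (∑ j ∈ range (n + 1), (-1 : ℝ) ^ j * (n.choose j : ℝ) * b ^ (-(j : ℤ)) *
        (∏ i ∈ range j, (((m : ℝ) - i) * ((m : ℝ) + δ - i))) *
        (∏ i ∈ range (n - j), (((M₁ : ℝ) - m - i) * ((M₂ : ℝ) - m - δ - i)))) *
      ((γ + m) ^ k) *
      (b ^ m / ((m.factorial : ℝ) * ((M₁ - m).factorial : ℝ) *
        Real.Gamma ((m : ℝ) + δ + 1) * Real.Gamma ((M₂ : ℝ) - m - δ + 1))) = 0 := by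
  have hbne : b ≠ 0 := ne_of_gt hb0
  set g : ℤ → ℝ := fun s => b ^ s /
      (Real.Gamma ((s : ℝ) + 1) * Real.Gamma ((M₁ : ℝ) - n - s + 1) *
       Real.Gamma ((s : ℝ) + δ + 1) * Real.Gamma ((M₂ : ℝ) - n - s - δ + 1)) with hgdef
  have hg_neg : ∀ s : ℤ, s < 0 → g s = 0 := by
    intro s hs
    have h0 : Real.Gamma ((s : ℝ) + 1) = 0 := by
      rw [show (s : ℝ) + 1 = ((s + 1 : ℤ) : ℝ) by push_cast; ring]
      exact gamma_int_nonpos (by omega)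
    simp [hgdef, h0]
  have hg_big : ∀ s : ℤ, (M₁ : ℤ) - n < s → g s = 0 := by
    intro s hs
    have h0 : Real.Gamma ((M₁ : ℝ) - n - s + 1) = 0 := by
      rw [show (M₁ : ℝ) - n - s + 1 = (((M₁ : ℤ) - n - s + 1 : ℤ) : ℝ) by push_cast; ring]
      exact gamma_int_nonpos (by omega)
    simp [hgdef, h0]
  -- the pointwise Rodrigues-type identity
  have hpt : ∀ m : ℕ, m ≤ M₁ → ∀ j : ℕ, j ≤ n →
      b ^ (-(j : ℤ)) *
        (∏ i ∈ range j, (((m : ℝ) - i) * ((m : ℝ) + δ - i))) *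
        (∏ i ∈ range (n - j), (((M₁ : ℝ) - m - i) * ((M₂ : ℝ) - m - δ - i))) *
        (b ^ m / ((m.factorial : ℝ) * ((M₁ - m).factorial : ℝ) *
          Real.Gamma ((m : ℝ) + δ + 1) * Real.Gamma ((M₂ : ℝ) - m - δ + 1)))
      = g ((m : ℤ) - j) := by
    intro m hm j hj
    have hmR : ((M₁ - m : ℕ) : ℝ) = (M₁ : ℝ) - m := by
      push_cast [Nat.cast_sub hm]; ring
    have hmle : (m : ℝ) ≤ (M₁ : ℝ) := by exact_mod_cast hm
    have e1 := gamma_ratio_nat m j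
    have e2 : (∏ i ∈ range (n - j), ((M₁ : ℝ) - m - i)) / Real.Gamma ((M₁ : ℝ) - m + 1)
        = 1 / Real.Gamma ((M₁ : ℝ) - m - ((n - j : ℕ) : ℝ) + 1) := by
      have := gamma_ratio_nat (M₁ - m) (n - j)
      rw [hmR] at this
      exact this
    have e3 : (∏ i ∈ range j, ((m : ℝ) + δ - i)) / Real.Gamma ((m : ℝ) + δ + 1)
        = 1 / Real.Gamma ((m : ℝ) + δ - j + 1) := by
      apply gamma_ratio
      · intro i hi h0
        exact hδint ((i : ℤ) - m) (by rw [sub_eq_zero] at h0; push_cast; linarith)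
      · exact ne_of_gt (Real.Gamma_pos_of_pos (by have := Nat.cast_nonneg (α := ℝ) m; linarith))
    have e4 : (∏ i ∈ range (n - j), ((M₂ : ℝ) - m - δ - i)) / Real.Gamma ((M₂ : ℝ) - m - δ + 1)
        = 1 / Real.Gamma ((M₂ : ℝ) - m - δ - ((n - j : ℕ) : ℝ) + 1) := by
      apply gamma_ratio
      · intro i hi h0
        exact hδint ((M₂ : ℤ) - m - i) (by rw [sub_eq_zero] at h0; push_cast; linarith)
      · exact ne_of_gt (Real.Gamma_pos_of_pos (by linarith))
    have hfac1 : (m.factorial : ℝ) = Real.Gamma ((m : ℝ) + 1) :=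
      (Real.Gamma_nat_eq_factorial m).symm
    have hfac2 : (((M₁ - m).factorial : ℝ)) = Real.Gamma ((M₁ : ℝ) - m + 1) := by
      rw [← hmR]; exact (Real.Gamma_nat_eq_factorial (M₁ - m)).symm
    have hgval : g ((m : ℤ) - j) = b ^ m * ((b : ℝ) ^ j)⁻¹ *
        (1 / Real.Gamma ((m : ℝ) - j + 1)) *
        (1 / Real.Gamma ((M₁ : ℝ) - m - ((n - j : ℕ) : ℝ) + 1)) *
        (1 / Real.Gamma ((m : ℝ) + δ - j + 1)) *
        (1 / Real.Gamma ((M₂ : ℝ) - m - δ - ((n - j : ℕ) : ℝ) + 1)) := by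
      simp only [hgdef]
      rw [zpow_sub₀ hbne, zpow_natCast, zpow_natCast]
      rw [show (((m : ℤ) - j : ℤ) : ℝ) = (m : ℝ) - j by push_cast; ring]
      rw [show (M₁ : ℝ) - n - ((m : ℝ) - j) + 1
            = (M₁ : ℝ) - m - ((n - j : ℕ) : ℝ) + 1 by push_cast [Nat.cast_sub hj]; ring]
      rw [show (m : ℝ) - j + δ + 1 = (m : ℝ) + δ - j + 1 by ring]
      rw [show (M₂ : ℝ) - n - ((m : ℝ) - j) - δ + 1
            = (M₂ : ℝ) - m - δ - ((n - j : ℕ) : ℝ) + 1 by push_cast [Nat.cast_sub hj]; ring]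
      field_simp
    rw [hgval, hfac1, hfac2, zpow_neg, zpow_natCast]
    rw [← e1, ← e2, ← e3, ← e4]
    simp only [prod_mul_distrib]
    ring
  have step1 : ∑ m ∈ range (M₁ + 1),
      (∑ j ∈ range (n + 1), (-1 : ℝ) ^ j * (n.choose j : ℝ) * b ^ (-(j : ℤ)) *
        (∏ i ∈ range j, (((m : ℝ) - i) * ((m : ℝ) + δ - i))) *
        (∏ i ∈ range (n - j), (((M₁ : ℝ) - m - i) * ((M₂ : ℝ) - m - δ - i)))) *
      ((γ + m) ^ k) *
      (b ^ m / ((m.factorial : ℝ) * ((M₁ - m).factorial : ℝ) *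
        Real.Gamma ((m : ℝ) + δ + 1) * Real.Gamma ((M₂ : ℝ) - m - δ + 1)))
    = ∑ m ∈ range (M₁ + 1), ∑ j ∈ range (n + 1),
        ((-1 : ℝ) ^ j * (n.choose j : ℝ)) * ((γ + m) ^ k * g ((m : ℤ) - j)) := by
    refine sum_congr rfl fun m hm => ?_
    rw [sum_mul, sum_mul]
    refine sum_congr rfl fun j hj => ?_
    rw [← hpt m (by simp only [mem_range] at hm; omega) j
      (by simp only [mem_range] at hj; omega)]
    ring
  rw [step1, Finset.sum_comm]
  have step2 : ∀ j ∈ range (n + 1), (∑ m ∈ range (M₁ + 1),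
      ((-1 : ℝ) ^ j * (n.choose j : ℝ)) * ((γ + m) ^ k * g ((m : ℤ) - j)))
    = ∑ s ∈ range (M₁ - n + 1),
      ((-1 : ℝ) ^ j * (n.choose j : ℝ)) * ((γ + ((s + j : ℕ) : ℝ)) ^ k * g ((s : ℤ))) := by
    intro j hj
    have hjn : j ≤ n := by simp only [mem_range] at hj; omega
    have hsub : (range (M₁ - n + 1)).image (· + j) ⊆ range (M₁ + 1) := by
      intro m hm
      simp only [mem_image, mem_range] at hm ⊢
      obtain ⟨s, hs, rfl⟩ := hm
      omega
    have hvan : ∀ m ∈ range (M₁ + 1), m ∉ (range (M₁ - n + 1)).image (· + j) →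
        ((-1 : ℝ) ^ j * (n.choose j : ℝ)) * ((γ + m) ^ k * g ((m : ℤ) - j)) = 0 := by
      intro m hm hnot
      simp only [mem_image, mem_range, not_exists] at hm hnot
      have hcase : ((m : ℤ) - j < 0) ∨ ((M₁ : ℤ) - n < (m : ℤ) - j) := by
        by_contra hc
        push_neg at hc
        exact hnot (m - j) ⟨by omega, by omega⟩
      rcases hcase with h | h
      · rw [hg_neg _ h]; ring
      · rw [hg_big _ h]; ring
    rw [← Finset.sum_subset hsub hvan]
    rw [Finset.sum_image (fun x _ y _ h => by omega)]
    refine sum_congr rfl fun s hs => ?_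
    rw [show (((s + j : ℕ) : ℤ) - (j : ℤ)) = (s : ℤ) by push_cast; ring]
  rw [Finset.sum_congr rfl step2, Finset.sum_comm]
  refine Finset.sum_eq_zero fun s hs => ?_
  have hgrp : ∑ j ∈ range (n + 1),
      ((-1 : ℝ) ^ j * (n.choose j : ℝ)) * ((γ + ((s + j : ℕ) : ℝ)) ^ k * g ((s : ℤ)))
    = (∑ j ∈ range (n + 1),
        (-1 : ℝ) ^ j * (n.choose j : ℝ) * (γ + ((s + j : ℕ) : ℝ)) ^ k) * g ((s : ℤ)) := by
    rw [sum_mul]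
    exact sum_congr rfl fun j _ => by ring
  rw [hgrp]
  have hq : ((X + C (γ + (s : ℝ))) ^ k : Polynomial ℝ).degree < (n : WithBot ℕ) := by
    rw [Polynomial.degree_pow, Polynomial.degree_X_add_C]
    rw [show (k • (1 : WithBot ℕ)) = (k : WithBot ℕ) by simp]
    exact_mod_cast hk
  have hdv := diff_vanish n ((X + C (γ + (s : ℝ))) ^ k) hq 0
  have hzero : ∑ j ∈ range (n + 1),
      (-1 : ℝ) ^ j * (n.choose j : ℝ) * (γ + ((s + j : ℕ) : ℝ)) ^ k = 0 := by
    rw [← hdv]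
    refine sum_congr rfl fun j _ => ?_
    simp only [Polynomial.eval_pow, Polynomial.eval_add, Polynomial.eval_X, Polynomial.eval_C]
    push_cast
    ring
  rw [hzero, zero_mul]


/-- The paper's Kravchuk–Kravchuk family: the weights `W_j` on the interlacing shifted
lattices `γ_j + {0,…,N_j}` are positive, the Rodrigues polynomial `P` has degree exactly
`2n` (Condition MD2 is `b ≠ 1`), and `P` is orthogonal to `x^k`, `k < n`, with respect
to both discrete measures. -/
theorem stmt_11 (b : ℝ) (hb0 : 0 < b) (hb1 : b ≠ 1) (N₁ N₂ n : ℕ) (hnN : n ≤ N₁)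
    (γ₁ γ₂ : ℝ)
    (hlat : (N₁ = N₂ ∧ 0 < |γ₁ - γ₂| ∧ |γ₁ - γ₂| < 1) ∨
            (N₂ = N₁ + 1 ∧ 0 < γ₁ - γ₂ ∧ γ₁ - γ₂ < 1))
    (W₁ W₂ : ℕ → ℝ)
    (hW₁ : ∀ m : ℕ, m ≤ N₁ → W₁ m = b ^ m /
      ((m.factorial : ℝ) * ((N₁ - m).factorial : ℝ) *
        Real.Gamma ((m : ℝ) + γ₁ - γ₂ + 1) * Real.Gamma ((N₂ : ℝ) - m - γ₁ + γ₂ + 1)))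
    (hW₂ : ∀ m : ℕ, m ≤ N₂ → W₂ m = b ^ m /
      ((m.factorial : ℝ) * ((N₂ - m).factorial : ℝ) *
        Real.Gamma ((m : ℝ) + γ₂ - γ₁ + 1) * Real.Gamma ((N₁ : ℝ) - m - γ₂ + γ₁ + 1)))
    (P : ℝ → ℝ)
    (hP : ∀ x : ℝ, P x = ∑ j ∈ Finset.range (n + 1),
      (-1 : ℝ) ^ j * (n.choose j : ℝ) * b ^ (-(j : ℤ)) *
        (∏ i ∈ Finset.range j, ((x - γ₁ - (i : ℝ)) * (x - γ₂ - (i : ℝ)))) *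
        ∏ i ∈ Finset.range (n - j),
          (((N₁ : ℝ) - x + γ₁ - (i : ℝ)) * ((N₂ : ℝ) - x + γ₂ - (i : ℝ)))) :
    (∀ m : ℕ, (m ≤ N₁ → 0 < W₁ m) ∧ (m ≤ N₂ → 0 < W₂ m)) ∧
    (∃ p : Polynomial ℝ, p.degree = (2 * n : ℕ) ∧ ∀ x : ℝ, P x = p.eval x) ∧
    (∀ k : ℕ, k < n →
      ∑ m ∈ Finset.range (N₁ + 1), P (γ₁ + m) * (γ₁ + m) ^ k * W₁ m = 0 ∧
      ∑ m ∈ Finset.range (N₂ + 1), P (γ₂ + m) * (γ₂ + m) ^ k * W₂ m = 0) := by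
  have hbne : b ≠ 0 := ne_of_gt hb0
  -- basic facts about δ = γ₁ - γ₂
  have hlb : -1 < γ₁ - γ₂ := by
    rcases hlat with ⟨hN, h0, h1⟩ | ⟨hN, h0, h1⟩
    · rcases abs_lt.mp h1 with ⟨h, _⟩; exact h
    · linarith
  have hub : γ₁ - γ₂ < 1 := by
    rcases hlat with ⟨hN, h0, h1⟩ | ⟨hN, h0, h1⟩
    · rcases abs_lt.mp h1 with ⟨_, h⟩; exact h
    · exact h1
  have hne : γ₁ - γ₂ ≠ 0 := by
    rcases hlat with ⟨hN, h0, h1⟩ | ⟨hN, h0, h1⟩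
    · exact fun h => (abs_pos.mp h0) h
    · exact ne_of_gt h0
  have hδint₁ : ∀ t : ℤ, γ₁ - γ₂ ≠ (t : ℝ) := by
    intro t ht
    have h1 : (-1 : ℤ) < t := by exact_mod_cast ht ▸ hlb
    have h2 : t < 1 := by exact_mod_cast ht ▸ hub
    have : t = 0 := by omega
    rw [this] at ht
    exact hne (by exact_mod_cast ht)
  have hδint₂ : ∀ t : ℤ, γ₂ - γ₁ ≠ (t : ℝ) := by
    intro t ht
    apply hδint₁ (-t)
    push_cast
    linarith
  have hmN₂ : ∀ m : ℕ, m ≤ N₁ → (m : ℝ) ≤ N₂ := by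
    intro m hm
    rcases hlat with ⟨hN, _, _⟩ | ⟨hN, _, _⟩
    · exact_mod_cast hN ▸ hm
    · have : m ≤ N₂ := by omega
      exact_mod_cast this
  refine ⟨?_, ?_, ?_⟩
  · -- positivity of the weights
    intro m
    constructor
    · intro hm
      rw [hW₁ m hm]
      apply div_pos (pow_pos hb0 m)
      have c1 : (0 : ℝ) < (m.factorial : ℝ) := by exact_mod_cast m.factorial_pos
      have c2 : (0 : ℝ) < ((N₁ - m).factorial : ℝ) := by exact_mod_cast (N₁ - m).factorial_pos
      have hm0 : (0 : ℝ) ≤ (m : ℝ) := Nat.cast_nonneg m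
      have c3 : 0 < Real.Gamma ((m : ℝ) + γ₁ - γ₂ + 1) :=
        Real.Gamma_pos_of_pos (by linarith)
      have c4 : 0 < Real.Gamma ((N₂ : ℝ) - m - γ₁ + γ₂ + 1) :=
        Real.Gamma_pos_of_pos (by have := hmN₂ m hm; linarith)
      exact mul_pos (mul_pos (mul_pos c1 c2) c3) c4
    · intro hm
      rw [hW₂ m hm]
      apply div_pos (pow_pos hb0 m)
      have c1 : (0 : ℝ) < (m.factorial : ℝ) := by exact_mod_cast m.factorial_pos
      have c2 : (0 : ℝ) < ((N₂ - m).factorial : ℝ) := by exact_mod_cast (N₂ - m).factorial_pos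
      have hm0 : (0 : ℝ) ≤ (m : ℝ) := Nat.cast_nonneg m
      have c3 : 0 < Real.Gamma ((m : ℝ) + γ₂ - γ₁ + 1) :=
        Real.Gamma_pos_of_pos (by linarith)
      have c4 : 0 < Real.Gamma ((N₁ : ℝ) - m - γ₂ + γ₁ + 1) := by
        apply Real.Gamma_pos_of_pos
        rcases hlat with ⟨hN, h0, h1⟩ | ⟨hN, h0, h1⟩
        · have : (m : ℝ) ≤ N₁ := by exact_mod_cast hN ▸ hm
          linarith
        · have : (m : ℝ) ≤ (N₁ : ℝ) + 1 := by
            have : m ≤ N₁ + 1 := by omega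
            exact_mod_cast this
          linarith
      exact mul_pos (mul_pos (mul_pos c1 c2) c3) c4
  · -- the polynomial of degree 2n
    set p : Polynomial ℝ := ∑ j ∈ range (n + 1),
      C ((-1 : ℝ) ^ j * (n.choose j : ℝ) * b ^ (-(j : ℤ))) *
        ((∏ i ∈ range j, ((X - C (γ₁ + i)) * (X - C (γ₂ + i)))) *
         (∏ i ∈ range (n - j),
            ((X - C ((N₁ : ℝ) + γ₁ - i)) * (X - C ((N₂ : ℝ) + γ₂ - i))))) with hpdef
    have hq : ∀ j ∈ range (n + 1),
        (((∏ i ∈ range j, ((X - C (γ₁ + i)) * (X - C (γ₂ + i)))) *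
         (∏ i ∈ range (n - j),
            ((X - C ((N₁ : ℝ) + γ₁ - i)) * (X - C ((N₂ : ℝ) + γ₂ - i))))) : Polynomial ℝ).Monic ∧
        (((∏ i ∈ range j, ((X - C (γ₁ + i)) * (X - C (γ₂ + i)))) *
         (∏ i ∈ range (n - j),
            ((X - C ((N₁ : ℝ) + γ₁ - i)) * (X - C ((N₂ : ℝ) + γ₂ - i))))) : Polynomial ℝ).natDegree
          = 2 * n := by
      intro j hj
      have hjn : j ≤ n := by simp only [mem_range] at hj; omega
      have m1 : (∏ i ∈ range j, ((X - C (γ₁ + i)) * (X - C (γ₂ + i))) : Polynomial ℝ).Monic :=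
        monic_prod_of_monic _ _ fun i _ => (monic_X_sub_C _).mul (monic_X_sub_C _)
      have m2 : (∏ i ∈ range (n - j),
          ((X - C ((N₁ : ℝ) + γ₁ - i)) * (X - C ((N₂ : ℝ) + γ₂ - i))) : Polynomial ℝ).Monic :=
        monic_prod_of_monic _ _ fun i _ => (monic_X_sub_C _).mul (monic_X_sub_C _)
      refine ⟨m1.mul m2, ?_⟩
      rw [m1.natDegree_mul m2]
      rw [natDegree_prod_of_monic _ _ fun i _ => (monic_X_sub_C _).mul (monic_X_sub_C _)]
      rw [natDegree_prod_of_monic _ _ fun i _ => (monic_X_sub_C _).mul (monic_X_sub_C _)]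
      have hd : ∀ a c : ℝ, ((X - C a) * (X - C c) : Polynomial ℝ).natDegree = 2 := by
        intro a c
        rw [(monic_X_sub_C a).natDegree_mul (monic_X_sub_C c), natDegree_X_sub_C,
          natDegree_X_sub_C]
      simp only [hd, sum_const, card_range, smul_eq_mul]
      omega
    have hcoeff : p.coeff (2 * n) = (1 - b⁻¹) ^ n := by
      rw [hpdef, finset_sum_coeff]
      have : ∀ j ∈ range (n + 1),
          (C ((-1 : ℝ) ^ j * (n.choose j : ℝ) * b ^ (-(j : ℤ))) *
            ((∏ i ∈ range j, ((X - C (γ₁ + i)) * (X - C (γ₂ + i)))) *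
             (∏ i ∈ range (n - j),
                ((X - C ((N₁ : ℝ) + γ₁ - i)) * (X - C ((N₂ : ℝ) + γ₂ - i)))))).coeff (2 * n)
          = (-1 : ℝ) ^ j * (n.choose j : ℝ) * b ^ (-(j : ℤ)) := by
        intro j hj
        rw [coeff_C_mul]
        obtain ⟨hmon, hdeg⟩ := hq j hj
        rw [show (2 * n) = (((∏ i ∈ range j, ((X - C (γ₁ + i)) * (X - C (γ₂ + i)))) *
             (∏ i ∈ range (n - j),
                ((X - C ((N₁ : ℝ) + γ₁ - i)) * (X - C ((N₂ : ℝ) + γ₂ - i))))) :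
             Polynomial ℝ).natDegree from hdeg.symm, hmon.coeff_natDegree, mul_one]
      rw [sum_congr rfl this]
      rw [show (1 - b⁻¹ : ℝ) = -b⁻¹ + 1 by ring, add_pow]
      refine sum_congr rfl fun j hj => ?_
      rw [zpow_neg, zpow_natCast, ← inv_pow, neg_pow, one_pow]
      ring
    have hcne : p.coeff (2 * n) ≠ 0 := by
      rw [hcoeff]
      apply pow_ne_zero
      intro h
      apply hb1
      have : b⁻¹ = 1 := by linarith
      exact inv_eq_one.mp this
    have hndle : p.natDegree ≤ 2 * n := by
      rw [hpdef]
      apply natDegree_sum_le_of_forall_le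
      intro j hj
      apply le_trans (natDegree_mul_le)
      rw [natDegree_C, (hq j hj).2]
      omega
    have hpne : p ≠ 0 := fun h => hcne (by rw [h, coeff_zero])
    have hdeg : p.degree = (2 * n : ℕ) := by
      apply degree_eq_of_le_of_coeff_ne_zero _ hcne
      exact le_trans degree_le_natDegree (by exact_mod_cast hndle)
    refine ⟨p, hdeg, ?_⟩
    intro x
    rw [hP, hpdef]
    rw [eval_finset_sum]
    refine sum_congr rfl fun j hj => ?_
    simp only [eval_mul, eval_C, eval_prod, eval_sub, eval_X]
    have A : (∏ i ∈ range j, ((x - γ₁ - (i : ℝ)) * (x - γ₂ - (i : ℝ))))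
        = ∏ i ∈ range j, ((x - (γ₁ + i)) * (x - (γ₂ + i))) :=
      prod_congr rfl fun i _ => by ring
    have B : (∏ i ∈ range (n - j),
          (((N₁ : ℝ) - x + γ₁ - (i : ℝ)) * ((N₂ : ℝ) - x + γ₂ - (i : ℝ))))
        = ∏ i ∈ range (n - j),
          ((x - ((N₁ : ℝ) + γ₁ - i)) * (x - ((N₂ : ℝ) + γ₂ - i))) :=
      prod_congr rfl fun i _ => by ring
    rw [A, B]
    ring
  · -- orthogonality on both lattices
    intro k hk
    constructor
    · have hpos₁ : 0 < (N₂ : ℝ) - N₁ - (γ₁ - γ₂) + 1 := by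
        rcases hlat with ⟨hN, h0, h1⟩ | ⟨hN, h0, h1⟩
        · subst hN; linarith
        · subst hN; push_cast; linarith
      have key := ortho b hb0 N₁ N₂ n hnN (γ₁ - γ₂) hδint₁ hlb hpos₁ k hk γ₁
      rw [← key]
      refine sum_congr rfl fun m hm => ?_
      have hm' : m ≤ N₁ := by simp only [mem_range] at hm; omega
      rw [hP (γ₁ + m), hW₁ m hm']
      congr 1
      · congr 1
        refine sum_congr rfl fun j _ => ?_
        congr 1
        · congr 1
          exact prod_congr rfl fun i _ => by ring
        · exact prod_congr rfl fun i _ => by ring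
      · rw [show (m : ℝ) + γ₁ - γ₂ + 1 = (m : ℝ) + (γ₁ - γ₂) + 1 by ring,
          show (N₂ : ℝ) - m - γ₁ + γ₂ + 1 = (N₂ : ℝ) - m - (γ₁ - γ₂) + 1 by ring]
    · have hn₂ : n ≤ N₂ := by rcases hlat with ⟨hN, _, _⟩ | ⟨hN, _, _⟩ <;> omega
      have hlb₂ : -1 < γ₂ - γ₁ := by linarith
      have hpos₂ : 0 < (N₁ : ℝ) - N₂ - (γ₂ - γ₁) + 1 := by
        rcases hlat with ⟨hN, h0, h1⟩ | ⟨hN, h0, h1⟩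
        · subst hN; linarith
        · subst hN; push_cast; linarith
      have key := ortho b hb0 N₂ N₁ n hn₂ (γ₂ - γ₁) hδint₂ hlb₂ hpos₂ k hk γ₂
      rw [← key]
      refine sum_congr rfl fun m hm => ?_
      have hm' : m ≤ N₂ := by simp only [mem_range] at hm; omega
      rw [hP (γ₂ + m), hW₂ m hm']
      congr 1
      · congr 1
        refine sum_congr rfl fun j _ => ?_
        congr 1
        · congr 1
          exact prod_congr rfl fun i _ => by ring
        · exact prod_congr rfl fun i _ => by ring
      · rw [show (m : ℝ) + γ₂ - γ₁ + 1 = (m : ℝ) + (γ₂ - γ₁) + 1 by ring,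
          show (N₁ : ℝ) - m - γ₂ + γ₁ + 1 = (N₁ : ℝ) - m - (γ₂ - γ₁) + 1 by ring]
end

section
/- Fix N, n ∈ ℕ with 1 ≤ N and n ≤ N, and real numbers α, β, γ_1, γ_2 such that: 0 < |γ_1 − γ_2| < 1; α > max(0, γ_2 − γ_1); −β − N > max(0, γ_2 − γ_1); β ≠ −m and β − γ_1 + γ_2 ≠ −m for every m ∈ ℕ; and α + β ≠ z for every integer z with z = N or 3 − 2N ≤ z ≤ N − 2. Define G(x) = Γ(α + x − γ_2)Γ(β + N − x + γ_2) / (Γ(α)Γ(β)Γ(x − γ_1 + 1)Γ(N − x + γ_1 + 1)Γ(x − γ_2 + 1)Γ(N − x + γ_2 + 1)) and Q : ℝ → ℝ by Q(x) = Σ_{j=0}^{n} C(n,j) · Π_{i=0}^{j−1} [(x − γ_1 − i)(x − γ_2 − i)(β + N − x + γ_2 + i)] · Π_{i=0}^{n−j−1} [(N − x + γ_1 − i)(x − γ_2 + α + i)(N − x + γ_2 − i)]. Then: (i) Q is the evaluation of a real polynomial of degree exactly 2n; (ii) for every j ∈ {1,2} and every natural number k < n, Σ_{m=0}^{N} Q(γ_j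 + m) · (γ_j + m)^k · (−1)^m · G(γ_j + m) = 0. -/
open Polynomial Finset

namespace Stmt13Aux

/-- Pascal splitting of a binomially weighted sum. -/
lemma binom_step (k : ℕ) (t : ℕ → ℝ) :
    ∑ l ∈ range (k + 2), ((k+1).choose l : ℝ) * t l
      = ∑ l ∈ range (k + 1), (k.choose l : ℝ) * t l
        + ∑ l ∈ range (k + 1), (k.choose l : ℝ) * t (l + 1) := by
  rw [Finset.sum_range_succ' (fun l => ((k+1).choose l : ℝ) * t l)]
  have h1 : ∀ l, (((k+1).choose (l+1) : ℕ) : ℝ) = (k.choose l : ℝ) + (k.choose (l+1) : ℝ) := by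
    intro l; rw [Nat.choose_succ_succ]; push_cast; ring
  have : ∑ l ∈ range (k + 1), ((k+1).choose (l+1) : ℝ) * t (l+1)
      = ∑ l ∈ range (k + 1), (k.choose l : ℝ) * t (l+1)
        + ∑ l ∈ range (k + 1), (k.choose (l+1) : ℝ) * t (l+1) := by
    rw [← Finset.sum_add_distrib]
    refine Finset.sum_congr rfl fun l _ => ?_
    rw [h1]; ring
  rw [this]
  have h2 : ∑ l ∈ range (k + 1), (k.choose (l+1) : ℝ) * t (l+1) + ((k+1).choose 0 : ℝ) * t 0
      = ∑ l ∈ range (k + 1), (k.choose l : ℝ) * t l := by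
    rw [show ((k+1).choose 0 : ℝ) = (k.choose 0 : ℝ) by norm_num]
    rw [← Finset.sum_range_succ' (fun l => (k.choose l : ℝ) * t l)]
    rw [Finset.sum_range_succ]
    simp [Nat.choose_succ_self]
  linarith [h2]

/-- Coefficients of a polynomial composed with `X + C r`. -/
lemma shiftCoeff (q : Polynomial ℝ) (r : ℝ) (m : ℕ) (h : q.natDegree ≤ m + 1) :
    (q.comp (X + C r)).coeff m = q.coeff m + (m+1) * r * q.coeff (m+1) := by
  have ht : q.comp (X + C r) = Polynomial.taylor r q := (Polynomial.taylor_apply r q).symm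
  rw [ht, Polynomial.taylor_coeff]
  have hd : (Polynomial.hasseDeriv m q).natDegree < 2 := by
    have := Polynomial.natDegree_hasseDeriv_le q m
    omega
  rw [Polynomial.eval_eq_sum_range' hd]
  rw [Finset.sum_range_succ, Finset.sum_range_one]
  rw [Polynomial.hasseDeriv_coeff, Polynomial.hasseDeriv_coeff]
  rw [Nat.zero_add, Nat.choose_self, show 1 + m = m + 1 from Nat.add_comm 1 m,
    Nat.choose_succ_self_right]
  push_cast; ring


lemma comp_sub_one (q : Polynomial ℝ) : q.comp (X - C 1) = q.comp (X + C (-1)) := by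
  rw [sub_eq_add_neg, ← Polynomial.C_neg]

lemma shiftCoeff' (q : Polynomial ℝ) (m : ℕ) (h : q.natDegree ≤ m + 1) :
    (q.comp (X - C 1)).coeff m = q.coeff m - (m+1) * q.coeff (m+1) := by
  rw [comp_sub_one, shiftCoeff q (-1) m h]; ring

lemma natDegree_comp_shift_le (q : Polynomial ℝ) (m : ℕ) (h : q.natDegree ≤ m) :
    (q.comp (X - C 1)).natDegree ≤ m := by
  rw [Polynomial.natDegree_le_iff_coeff_eq_zero]
  intro i hi
  have h1 : q.natDegree ≤ i + 1 := by omega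
  rw [shiftCoeff' q i h1]
  rw [Polynomial.coeff_eq_zero_of_natDegree_lt (by omega),
    Polynomial.coeff_eq_zero_of_natDegree_lt (by omega)]
  ring

lemma coeff_comp_shift_top (q : Polynomial ℝ) (m : ℕ) (h : q.natDegree ≤ m) :
    (q.comp (X - C 1)).coeff m = q.coeff m := by
  rw [shiftCoeff' q m (by omega),
    Polynomial.coeff_eq_zero_of_natDegree_lt (show q.natDegree < m + 1 by omega)]
  ring

/-- cubic polynomial in coefficient form -/
noncomputable def cub (a b c d : ℝ) : Polynomial ℝ :=
  C a * X ^ 3 + C b * X ^ 2 + C c * X + C d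

lemma cub_eval (a b c d x : ℝ) :
    (cub a b c d).eval x = a * x ^ 3 + b * x ^ 2 + c * x + d := by
  simp [cub]

lemma natDegree_cub_le (a b c d : ℝ) : (cub a b c d).natDegree ≤ 3 := by
  unfold cub
  refine le_trans (Polynomial.natDegree_add_le _ _) ?_
  refine max_le (le_trans (Polynomial.natDegree_add_le _ _) ?_) ?_
  · refine max_le (le_trans (Polynomial.natDegree_add_le _ _) ?_) ?_
    · refine max_le ?_ ?_
      · exact le_trans (Polynomial.natDegree_C_mul_le _ _) (by simp [Polynomial.natDegree_X_pow])
      · exact le_trans (Polynomial.natDegree_C_mul_le _ _) (by simp [Polynomial.natDegree_X_pow])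
    · exact le_trans (Polynomial.natDegree_C_mul_le _ _) (by simp)
  · simp

lemma mul_cub_coeff (a b c d : ℝ) (q : Polynomial ℝ) (m : ℕ) (h : q.natDegree ≤ m) :
    (cub a b c d * q).coeff (m + 2) = a * (q * X).coeff m + b * q.coeff m := by
  have hq : cub a b c d * q
      = C a * (q * X * X ^ 2) + (C b * (q * X ^ 2) + (C c * (q * X) + C d * q)) := by
    unfold cub; ring
  rw [hq]
  have e1 : (q * X * X ^ 2).coeff (m + 2) = (q * X).coeff m := Polynomial.coeff_mul_X_pow _ 2 m
  have e2 : (q * X ^ 2).coeff (m + 2) = q.coeff m := Polynomial.coeff_mul_X_pow _ 2 m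
  have e3 : (q * X).coeff (m + 2) = q.coeff (m + 1) := Polynomial.coeff_mul_X q (m+1)
  simp only [Polynomial.coeff_add, Polynomial.coeff_C_mul, e1, e2, e3]
  rw [Polynomial.coeff_eq_zero_of_natDegree_lt (show q.natDegree < m + 1 by omega),
    Polynomial.coeff_eq_zero_of_natDegree_lt (show q.natDegree < m + 2 by omega)]
  ring

lemma natDegree_mul_cub_le (a b c d : ℝ) (q : Polynomial ℝ) (m : ℕ) (h : q.natDegree ≤ m) :
    (cub a b c d * q).natDegree ≤ m + 3 := by
  refine le_trans (Polynomial.natDegree_mul_le) ?_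
  have := natDegree_cub_le a b c d
  omega

lemma mulX_coeff_shift (q : Polynomial ℝ) (m : ℕ) (h : q.natDegree ≤ m) :
    (q.comp (X - C 1) * X).coeff m = (q * X).coeff m - m * q.coeff m := by
  cases m with
  | zero => simp [Polynomial.coeff_mul_X_zero]
  | succ m' =>
    have e1 : (q.comp (X - C 1) * X).coeff (m'+1) = (q.comp (X - C 1)).coeff m' :=
      Polynomial.coeff_mul_X _ _
    have e2 : (q * X).coeff (m'+1) = q.coeff m' := Polynomial.coeff_mul_X _ _
    rw [e1, e2, shiftCoeff' q m' (by omega)]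
    push_cast; ring


/-- Alternating binomial sums annihilate polynomials of low degree. -/
lemma altsum : ∀ (nn : ℕ) (p : Polynomial ℝ), (∀ i, nn ≤ i → p.coeff i = 0) →
    ∀ c : ℝ, ∑ l ∈ range (nn + 1), (-1 : ℝ) ^ l * (nn.choose l : ℝ) * p.eval (c + l) = 0 := by
  intro nn
  induction nn with
  | zero =>
    intro p hp c
    have : p = 0 := Polynomial.ext fun i => hp i (Nat.zero_le i)
    simp [this]
  | succ k ih =>
    intro p hp c
    have hdeg : p.natDegree ≤ k := by
      rw [Polynomial.natDegree_le_iff_coeff_eq_zero]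
      intro i hi; exact hp i (by omega)
    set q : Polynomial ℝ := p - p.comp (X + C 1) with hqdef
    have hq : ∀ i, k ≤ i → q.coeff i = 0 := by
      intro i hi
      have h1 : p.natDegree ≤ i + 1 := by omega
      rw [hqdef, Polynomial.coeff_sub, shiftCoeff p 1 i h1]
      rcases Nat.lt_or_ge i k with h | h
      · omega
      · rcases Nat.eq_or_lt_of_le hi with heq | hlt
        · rw [Polynomial.coeff_eq_zero_of_natDegree_lt (show p.natDegree < i + 1 by omega)]
          ring
        · rw [Polynomial.coeff_eq_zero_of_natDegree_lt (show p.natDegree < i by omega),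
            Polynomial.coeff_eq_zero_of_natDegree_lt (show p.natDegree < i + 1 by omega)]
          ring
    have key := binom_step k (fun l => (-1 : ℝ) ^ l * p.eval (c + l))
    have e1 : ∑ l ∈ range (k + 2), (-1:ℝ) ^ l * ((k+1).choose l : ℝ) * p.eval (c + l)
        = ∑ l ∈ range (k + 2), ((k+1).choose l : ℝ) * ((-1:ℝ) ^ l * p.eval (c + l)) := by
      refine Finset.sum_congr rfl fun l _ => by ring
    rw [e1, key]
    have e2 : ∀ l : ℕ, (k.choose l : ℝ) * ((-1:ℝ) ^ (l+1) * p.eval (c + (l+1)))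
        = -((k.choose l : ℝ) * ((-1:ℝ) ^ l * p.eval ((c+1) + l))) := by
      intro l
      have : c + ((l : ℝ) + 1) = (c + 1) + l := by ring
      push_cast
      rw [this]; ring
    have e3 : ∑ l ∈ range (k + 1), (k.choose l : ℝ) * ((-1:ℝ) ^ (l+1) * p.eval (c + (l+1)))
        = -∑ l ∈ range (k + 1), (k.choose l : ℝ) * ((-1:ℝ) ^ l * p.eval ((c+1) + l)) := by
      rw [← Finset.sum_neg_distrib]
      exact Finset.sum_congr rfl fun l _ => e2 l
    push_cast
    rw [e3, ← sub_eq_add_neg, ← Finset.sum_sub_distrib]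
    have e4 : ∀ l : ℕ,
        (k.choose l : ℝ) * ((-1:ℝ) ^ l * p.eval (c + l))
          - (k.choose l : ℝ) * ((-1:ℝ) ^ l * p.eval ((c+1) + l))
        = (-1:ℝ) ^ l * (k.choose l : ℝ) * q.eval (c + l) := by
      intro l
      have harg : (c + 1) + (l:ℝ) = (c + (l:ℝ)) + 1 := by ring
      rw [hqdef, harg]
      simp only [Polynomial.eval_sub, Polynomial.eval_comp, Polynomial.eval_add,
        Polynomial.eval_X, Polynomial.eval_C]
      ring
    rw [Finset.sum_congr rfl fun l _ => e4 l]
    exact ih q hq c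


/-- Restrict a sum to a window where the function is supported. -/
lemma window (f : ℕ → ℝ) (NN l L : ℕ) (hlL : l + L ≤ NN)
    (h0 : ∀ m, m < l → f m = 0) (h1 : ∀ m, l + L < m → f m = 0) :
    ∑ m ∈ range (NN + 1), f m = ∑ u ∈ range (L + 1), f (u + l) := by
  have step1 : ∑ m ∈ range (NN + 1), f m = ∑ m ∈ range (l + L + 1), f m := by
    refine (Finset.sum_subset (Finset.range_subset_range.2 (by omega)) ?_).symm
    intro m _ hm
    exact h1 m (by simpa using hm)
  have step2 : ∑ m ∈ range (l + L + 1), f m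
      = ∑ m ∈ range l, f m + ∑ m ∈ Finset.Ico l (l + L + 1), f m := by
    rw [Finset.range_eq_Ico, ← Finset.sum_Ico_consecutive f (Nat.zero_le l) (by omega),
      ← Finset.range_eq_Ico]
  have step3 : ∑ m ∈ Finset.Ico l (l + L + 1), f m = ∑ u ∈ range (L + 1), f (l + u) := by
    have e : l + L + 1 - l = L + 1 := by omega
    rw [Finset.sum_Ico_eq_sum_range, e]
  rw [step1, step2, step3, Finset.sum_eq_zero (fun m hm => h0 m (by simpa using hm))]
  rw [zero_add]
  exact Finset.sum_congr rfl fun u _ => by rw [Nat.add_comm]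

/-- Gamma of a nonpositive integer argument vanishes. -/
lemma gamma_int_zero (z : ℤ) (hz : z ≤ 0) : Real.Gamma (z : ℝ) = 0 := by
  obtain ⟨m, rfl⟩ : ∃ m : ℕ, z = -(m : ℤ) := ⟨(-z).toNat, by omega⟩
  push_cast
  exact Real.Gamma_neg_nat_eq_zero m

/-- universal reflection of the Gamma recurrence on inverses. -/
lemma inv_gamma_step (B : ℝ) : (Real.Gamma B)⁻¹ = B * (Real.Gamma (B + 1))⁻¹ := by
  by_cases hB : B = 0
  · simp [hB, Real.Gamma_zero]
  · rw [Real.Gamma_add_one hB, mul_inv]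
    rw [← mul_assoc, mul_inv_cancel₀ hB, one_mul]


section Params

variable (α β γ₁ γ₂ : ℝ) (N n : ℕ)

noncomputable def cpol (k : ℕ) : Polynomial ℝ :=
  cub 1 ((α + n - k - γ₂) - ((N:ℝ) - n + k + γ₁) - ((N:ℝ) - n + k + γ₂))
    (((N:ℝ) - n + k + γ₁) * ((N:ℝ) - n + k + γ₂)
      - (α + n - k - γ₂) * (((N:ℝ) - n + k + γ₁) + ((N:ℝ) - n + k + γ₂)))
    ((α + n - k - γ₂) * ((N:ℝ) - n + k + γ₁) * ((N:ℝ) - n + k + γ₂))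

noncomputable def dpol : Polynomial ℝ :=
  cub (-1) ((β + N + γ₂) + γ₁ + γ₂) (-(γ₁ * γ₂ + (β + N + γ₂) * (γ₁ + γ₂)))
    ((β + N + γ₂) * γ₁ * γ₂)

lemma cpol_eval (k : ℕ) (x : ℝ) :
    (cpol α γ₁ γ₂ N n k).eval x
      = ((N:ℝ) - n + k + γ₁ - x) * (x - γ₂ + α + n - k) * ((N:ℝ) - n + k + γ₂ - x) := by
  rw [cpol, cub_eval]; ring

lemma dpol_eval (x : ℝ) :
    (dpol β γ₁ γ₂ N).eval x = (β + N + γ₂ - x) * (x - γ₁) * (x - γ₂) := by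
  rw [dpol, cub_eval]; ring

noncomputable def PP : ℕ → Polynomial ℝ
  | 0 => 1
  | (k+1) => cpol α γ₁ γ₂ N n (k+1) * PP k
      + dpol β γ₁ γ₂ N * ((PP k).comp (X - C 1))

noncomputable def Lc (k : ℕ) : ℝ := ∏ j ∈ range k, (α + β + 3*n - N - 3 - j)

lemma PP_deg : ∀ k : ℕ, (PP α β γ₁ γ₂ N n k).natDegree ≤ 2*k ∧
    (PP α β γ₁ γ₂ N n k).coeff (2*k) = Lc α β N n k := by
  intro k
  induction k with
  | zero => constructor <;> simp [PP, Lc]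
  | succ k ih =>
    obtain ⟨hdeg, hco⟩ := ih
    set q := PP α β γ₁ γ₂ N n k with hqdef
    have hdegc : (q.comp (X - C 1)).natDegree ≤ 2*k := natDegree_comp_shift_le q _ hdeg
    have hPP : PP α β γ₁ γ₂ N n (k+1)
        = cpol α γ₁ γ₂ N n (k+1) * q + dpol β γ₁ γ₂ N * (q.comp (X - C 1)) := rfl
    have key3 : ∀ m : ℕ, 2*k ≤ m → (PP α β γ₁ γ₂ N n (k+1)).coeff (m + 2)
        = ((α + (n:ℝ) - (k+1:ℕ) - γ₂) - ((N:ℝ) - n + (k+1:ℕ) + γ₁) - ((N:ℝ) - n + (k+1:ℕ) + γ₂)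
            + ((β + N + γ₂) + γ₁ + γ₂) + m) * q.coeff m := by
      intro m hm
      have h1 : q.natDegree ≤ m := le_trans hdeg hm
      have h2 : (q.comp (X - C 1)).natDegree ≤ m := le_trans hdegc hm
      rw [hPP, Polynomial.coeff_add, cpol, dpol, mul_cub_coeff _ _ _ _ _ m h1,
        mul_cub_coeff _ _ _ _ _ m h2, mulX_coeff_shift q m h1, coeff_comp_shift_top q m h1]
      ring
    constructor
    · rw [Polynomial.natDegree_le_iff_coeff_eq_zero]
      intro m hm
      rcases Nat.lt_or_ge m (2*k + 4) with hlt | hge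
      · have hm3 : m = (2*k + 1) + 2 := by omega
        rw [hm3, key3 (2*k+1) (by omega),
          Polynomial.coeff_eq_zero_of_natDegree_lt (show q.natDegree < 2*k+1 by omega)]
        ring
      · obtain ⟨m', rfl⟩ : ∃ m', m = m' + 2 := ⟨m - 2, by omega⟩
        rw [key3 m' (by omega),
          Polynomial.coeff_eq_zero_of_natDegree_lt (show q.natDegree < m' by omega)]
        ring
    · have h2k : 2*(k+1) = 2*k + 2 := by ring
      rw [h2k, key3 (2*k) le_rfl, hco, Lc, Lc, Finset.prod_range_succ]
      push_cast
      ring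

lemma PP_lead_ne (hN : 1 ≤ N) (hn1 : 1 ≤ n) (hnN : n ≤ N)
    (hMD2 : ∀ z : ℤ, (z = (N : ℤ) ∨ (3 - 2 * (N : ℤ) ≤ z ∧ z ≤ (N : ℤ) - 2)) →
      α + β ≠ (z : ℝ)) : Lc α β N n n ≠ 0 := by
  rw [Lc]
  refine Finset.prod_ne_zero_iff.2 fun j hj => ?_
  rw [Finset.mem_range] at hj
  have hz := hMD2 ((N:ℤ) + 3 + j - 3*n) ?_
  · intro hzero
    apply hz
    push_cast
    linarith [hzero]
  · rcases Nat.eq_or_lt_of_le hn1 with h1 | h1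
    · left; omega
    · right; constructor <;> [omega; omega]


noncomputable def Dl (l : ℕ) (x : ℝ) : ℝ :=
  ∏ i ∈ range l, ((x - γ₁ - (i:ℝ)) * (x - γ₂ - (i:ℝ)) * (β + (N:ℝ) - x + γ₂ + (i:ℝ)))

noncomputable def Cl (m K : ℕ) (x : ℝ) : ℝ :=
  ∏ i ∈ range m, (((N:ℝ) - n + K - x + γ₁ - (i:ℝ)) * (x - γ₂ + α + n - K + (i:ℝ))
    * ((N:ℝ) - n + K - x + γ₂ - (i:ℝ)))

noncomputable def qsum (k : ℕ) (x : ℝ) : ℝ :=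
  ∑ l ∈ range (k+1), (k.choose l : ℝ) * Dl β γ₁ γ₂ N l x * Cl α γ₁ γ₂ N n (k - l) k x

lemma Cl_succ (m K : ℕ) (x : ℝ) :
    Cl α γ₁ γ₂ N n (m + 1) (K + 1) x
      = (((N:ℝ) - n + (K+1:ℕ) + γ₁ - x) * (x - γ₂ + α + n - (K+1:ℕ))
          * ((N:ℝ) - n + (K+1:ℕ) + γ₂ - x)) * Cl α γ₁ γ₂ N n m K x := by
  rw [Cl, Finset.prod_range_succ', Cl]
  rw [mul_comm]
  congr 1
  · push_cast; ring
  · refine Finset.prod_congr rfl fun i _ => ?_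
    push_cast; ring

lemma Cl_shift (m K : ℕ) (x : ℝ) :
    Cl α γ₁ γ₂ N n m (K + 1) x = Cl α γ₁ γ₂ N n m K (x - 1) := by
  rw [Cl, Cl]
  refine Finset.prod_congr rfl fun i _ => ?_
  push_cast; ring

lemma Dl_succ (l : ℕ) (x : ℝ) :
    Dl β γ₁ γ₂ N (l + 1) x
      = ((β + (N:ℝ) + γ₂ - x) * (x - γ₁) * (x - γ₂)) * Dl β γ₁ γ₂ N l (x - 1) := by
  rw [Dl, Finset.prod_range_succ', Dl, mul_comm]
  congr 1
  · push_cast; ring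
  · refine Finset.prod_congr rfl fun i _ => ?_
    push_cast; ring

lemma qsum_rec (k : ℕ) (x : ℝ) :
    qsum α β γ₁ γ₂ N n (k+1) x
      = (((N:ℝ) - n + (k+1:ℕ) + γ₁ - x) * (x - γ₂ + α + n - (k+1:ℕ))
          * ((N:ℝ) - n + (k+1:ℕ) + γ₂ - x)) * qsum α β γ₁ γ₂ N n k x
        + ((β + (N:ℝ) + γ₂ - x) * (x - γ₁) * (x - γ₂)) * qsum α β γ₁ γ₂ N n k (x - 1) := by
  rw [qsum]
  rw [show k + 1 + 1 = k + 2 from rfl]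
  have assoc : ∑ l ∈ range (k + 2), ((k+1).choose l : ℝ) * Dl β γ₁ γ₂ N l x
        * Cl α γ₁ γ₂ N n (k + 1 - l) (k+1) x
      = ∑ l ∈ range (k + 2), ((k+1).choose l : ℝ)
        * (Dl β γ₁ γ₂ N l x * Cl α γ₁ γ₂ N n (k + 1 - l) (k+1) x) :=
    Finset.sum_congr rfl fun l _ => by ring
  rw [assoc, binom_step k (fun l => Dl β γ₁ γ₂ N l x * Cl α γ₁ γ₂ N n (k + 1 - l) (k+1) x)]
  congr 1
  · rw [qsum, Finset.mul_sum]
    refine Finset.sum_congr rfl fun l hl => ?_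
    rw [Finset.mem_range] at hl
    have e : k + 1 - l = (k - l) + 1 := by omega
    rw [e, Cl_succ]; ring
  · rw [qsum, Finset.mul_sum]
    refine Finset.sum_congr rfl fun l hl => ?_
    rw [Finset.mem_range] at hl
    have e : k + 1 - (l + 1) = k - l := by omega
    rw [e, Dl_succ, Cl_shift]; ring


lemma PP_eval (k : ℕ) (x : ℝ) :
    (PP α β γ₁ γ₂ N n k).eval x = qsum α β γ₁ γ₂ N n k x := by
  induction k generalizing x with
  | zero => simp [PP, qsum, Dl, Cl]
  | succ k ih =>
    have hPP : PP α β γ₁ γ₂ N n (k+1)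
        = cpol α γ₁ γ₂ N n (k+1) * PP α β γ₁ γ₂ N n k
          + dpol β γ₁ γ₂ N * ((PP α β γ₁ γ₂ N n k).comp (X - C 1)) := rfl
    rw [hPP, Polynomial.eval_add, Polynomial.eval_mul, Polynomial.eval_mul,
      Polynomial.eval_comp, cpol_eval, dpol_eval, qsum_rec]
    simp only [Polynomial.eval_sub, Polynomial.eval_X, Polynomial.eval_one, Polynomial.eval_C]
    rw [ih, ih]


noncomputable def W (k : ℕ) (y : ℝ) : ℝ :=
  Real.Gamma (α + n - k + y - γ₂) * Real.Gamma (β + N - y + γ₂) *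
    ((Real.Gamma α)⁻¹ * (Real.Gamma β)⁻¹ * (Real.Gamma (y - γ₁ + 1))⁻¹ *
     (Real.Gamma ((N:ℝ) - n + k - y + γ₁ + 1))⁻¹ * (Real.Gamma (y - γ₂ + 1))⁻¹ *
     (Real.Gamma ((N:ℝ) - n + k - y + γ₂ + 1))⁻¹)

lemma Wstep_c (hα : α > max 0 (γ₂ - γ₁)) (k : ℕ) (hk : k < n) (z : ℤ) (x : ℝ)
    (hx : x = γ₁ + z ∨ x = γ₂ + z) :
    W α β γ₁ γ₂ N n k x = W α β γ₁ γ₂ N n (k+1) x *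
      (((N:ℝ) - n + (k+1:ℕ) + γ₁ - x) * (x - γ₂ + α + n - (k+1:ℕ))
        * ((N:ℝ) - n + (k+1:ℕ) + γ₂ - x)) := by
  have hα0 : 0 < α := lt_of_le_of_lt (le_max_left _ _) hα
  have hα1 : γ₂ - γ₁ < α := lt_of_le_of_lt (le_max_right _ _) hα
  by_cases hA : x - γ₂ + α + (n:ℝ) - ((k+1:ℕ):ℝ) = 0
  · -- degenerate case : both sides vanish
    have hz : ∃ w, (Real.Gamma w)⁻¹ = 0 ∧
        (W α β γ₁ γ₂ N n k x = Real.Gamma (α + n - k + x - γ₂) * Real.Gamma (β + N - x + γ₂) *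
          ((Real.Gamma α)⁻¹ * (Real.Gamma β)⁻¹ * (Real.Gamma (x - γ₁ + 1))⁻¹ *
           (Real.Gamma ((N:ℝ) - n + k - x + γ₁ + 1))⁻¹ * (Real.Gamma (x - γ₂ + 1))⁻¹ *
           (Real.Gamma ((N:ℝ) - n + k - x + γ₂ + 1))⁻¹)) := ⟨0, by simp [Real.Gamma_zero], rfl⟩
    clear hz
    have hrhs : (x - γ₂ + α + (n:ℝ) - ((k+1:ℕ):ℝ)) = 0 := hA
    rw [W, W, hrhs]
    rcases hx with h | h
    · have hzlt : (z:ℝ) < 0 := by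
        have : (z:ℝ) = γ₂ - γ₁ - α + ((k+1:ℕ):ℝ) - n := by
          rw [h] at hA; push_cast at hA ⊢; linarith
        push_cast at this
        have hkn : ((k:ℝ) + 1) ≤ (n:ℝ) := by exact_mod_cast Nat.succ_le_of_lt hk
        linarith
      have hz' : z + 1 ≤ 0 := by
        have : z < 0 := by exact_mod_cast hzlt
        omega
      have hG0 : Real.Gamma (x - γ₁ + 1) = 0 := by
        rw [h, show γ₁ + (z:ℝ) - γ₁ + 1 = ((z + 1 : ℤ) : ℝ) by push_cast; ring]
        exact gamma_int_zero _ hz'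
      rw [hG0]
      simp
    · have hzlt : (z:ℝ) < 0 := by
        have : (z:ℝ) = -α + ((k+1:ℕ):ℝ) - n := by
          rw [h] at hA; push_cast at hA ⊢; linarith
        push_cast at this
        have hkn : ((k:ℝ) + 1) ≤ (n:ℝ) := by exact_mod_cast Nat.succ_le_of_lt hk
        linarith
      have hz' : z + 1 ≤ 0 := by
        have : z < 0 := by exact_mod_cast hzlt
        omega
      have hG0 : Real.Gamma (x - γ₂ + 1) = 0 := by
        rw [h, show γ₂ + (z:ℝ) - γ₂ + 1 = ((z + 1 : ℤ) : ℝ) by push_cast; ring]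
        exact gamma_int_zero _ hz'
      rw [hG0]
      simp
  · -- generic case : use the Gamma recurrences
    have e1 : α + (n:ℝ) - (k:ℝ) + x - γ₂ = (x - γ₂ + α + (n:ℝ) - ((k+1:ℕ):ℝ)) + 1 := by
      push_cast; ring
    have e2 : α + (n:ℝ) - ((k+1:ℕ):ℝ) + x - γ₂ = x - γ₂ + α + (n:ℝ) - ((k+1:ℕ):ℝ) := by
      push_cast; ring
    have a1 : (N:ℝ) - n + (k+1:ℕ) - x + γ₁ + 1 = ((N:ℝ) - n + k - x + γ₁ + 1) + 1 := by
      push_cast; ring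
    have a2 : (N:ℝ) - n + (k+1:ℕ) - x + γ₂ + 1 = ((N:ℝ) - n + k - x + γ₂ + 1) + 1 := by
      push_cast; ring
    rw [W, W, e1, e2, a1, a2, Real.Gamma_add_one hA,
      inv_gamma_step ((N:ℝ) - n + k - x + γ₁ + 1), inv_gamma_step ((N:ℝ) - n + k - x + γ₂ + 1)]
    push_cast
    ring

lemma Wstep_d (hβN : -β - N > max 0 (γ₂ - γ₁))
    (hβ : ∀ m : ℕ, β ≠ -(m : ℝ)) (hβγ : ∀ m : ℕ, β - γ₁ + γ₂ ≠ -(m : ℝ))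
    (k : ℕ) (z : ℤ) (x : ℝ) (hx : x = γ₁ + z ∨ x = γ₂ + z) :
    W α β γ₁ γ₂ N n k (x - 1) = W α β γ₁ γ₂ N n (k+1) x *
      ((β + (N:ℝ) + γ₂ - x) * (x - γ₁) * (x - γ₂)) := by
  have hβN0 : -β - (N:ℝ) > 0 := lt_of_le_of_lt (le_max_left _ _) hβN
  have hβN1 : -β - (N:ℝ) > γ₂ - γ₁ := lt_of_le_of_lt (le_max_right _ _) hβN
  have hB : β + (N:ℝ) - x + γ₂ ≠ 0 := by
    rcases hx with h | h
    · intro h0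
      rw [h] at h0
      have hzr : (z:ℝ) = β + N - γ₁ + γ₂ := by linarith
      have hzlt : (z:ℝ) < 0 := by linarith
      have hzz : z < 0 := by exact_mod_cast hzlt
      refine hβγ ((N:ℤ) - z).toNat ?_
      have : (((N:ℤ) - z).toNat : ℝ) = (N:ℝ) - z := by
        have : ((N:ℤ) - z).toNat = (N:ℤ) - z := Int.toNat_of_nonneg (by omega)
        exact_mod_cast congrArg (fun t : ℤ => (t:ℝ)) this
      rw [this, hzr]
      ring
    · intro h0
      rw [h] at h0
      have hzr : (z:ℝ) = β + N := by linarith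
      have hzlt : (z:ℝ) < 0 := by linarith
      have hzz : z < 0 := by exact_mod_cast hzlt
      refine hβ ((N:ℤ) - z).toNat ?_
      have : (((N:ℤ) - z).toNat : ℝ) = (N:ℝ) - z := by
        have : ((N:ℤ) - z).toNat = (N:ℤ) - z := Int.toNat_of_nonneg (by omega)
        exact_mod_cast congrArg (fun t : ℤ => (t:ℝ)) this
      rw [this, hzr]
      ring
  have e1 : β + (N:ℝ) - (x - 1) + γ₂ = (β + (N:ℝ) - x + γ₂) + 1 := by ring
  have e2 : α + (n:ℝ) - (k:ℝ) + (x - 1) - γ₂ = α + (n:ℝ) - ((k+1:ℕ):ℝ) + x - γ₂ := by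
    push_cast; ring
  have e3 : (x - 1) - γ₁ + 1 = x - γ₁ := by ring
  have e4 : (x - 1) - γ₂ + 1 = x - γ₂ := by ring
  have a1 : (N:ℝ) - n + k - (x - 1) + γ₁ + 1 = (N:ℝ) - n + (k+1:ℕ) - x + γ₁ + 1 := by
    push_cast; ring
  have a2 : (N:ℝ) - n + k - (x - 1) + γ₂ + 1 = (N:ℝ) - n + (k+1:ℕ) - x + γ₂ + 1 := by
    push_cast; ring
  rw [W, W, e1, e2, e3, e4, a1, a2, Real.Gamma_add_one hB,
    inv_gamma_step (x - γ₁), inv_gamma_step (x - γ₂)]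
  ring


noncomputable def Fsum (k : ℕ) (x : ℝ) : ℝ :=
  ∑ l ∈ range (k+1), (k.choose l : ℝ) * W α β γ₁ γ₂ N n 0 (x - l)

lemma rodrigues (hα : α > max 0 (γ₂ - γ₁)) (hβN : -β - N > max 0 (γ₂ - γ₁))
    (hβ : ∀ m : ℕ, β ≠ -(m : ℝ)) (hβγ : ∀ m : ℕ, β - γ₁ + γ₂ ≠ -(m : ℝ)) :
    ∀ k : ℕ, k ≤ n → ∀ (z : ℤ) (x : ℝ), (x = γ₁ + z ∨ x = γ₂ + z) →
      Fsum α β γ₁ γ₂ N n k x = W α β γ₁ γ₂ N n k x * qsum α β γ₁ γ₂ N n k x := by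
  intro k
  induction k with
  | zero =>
    intro _ z x hx
    rw [Fsum, qsum]
    simp [Dl, Cl]
  | succ k ih =>
    intro hk z x hx
    have hk' : k ≤ n := by omega
    have hkn : k < n := by omega
    have hsplit : Fsum α β γ₁ γ₂ N n (k+1) x
        = Fsum α β γ₁ γ₂ N n k x + Fsum α β γ₁ γ₂ N n k (x - 1) := by
      rw [Fsum, show k + 1 + 1 = k + 2 from rfl,
        binom_step k (fun l => W α β γ₁ γ₂ N n 0 (x - l)), Fsum, Fsum]
      congr 1
      refine Finset.sum_congr rfl fun l _ => ?_
      rw [show x - ((l+1:ℕ):ℝ) = (x - 1) - (l:ℝ) by push_cast; ring]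
    have hx1 : (x - 1) = γ₁ + ((z - 1 : ℤ):ℝ) ∨ (x - 1) = γ₂ + ((z - 1 : ℤ):ℝ) := by
      rcases hx with h | h
      · left; rw [h]; push_cast; ring
      · right; rw [h]; push_cast; ring
    rw [hsplit, ih hk' z x hx, ih hk' (z-1) (x-1) hx1,
      Wstep_c α β γ₁ γ₂ N n hα k hkn z x hx,
      Wstep_d α β γ₁ γ₂ N n hβN hβ hβγ k z x hx,
      qsum_rec]
    ring

lemma W0_vanish_lo (γ : ℝ) (hγ : γ = γ₁ ∨ γ = γ₂) (t : ℤ) (ht : t < 0) :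
    W α β γ₁ γ₂ N n 0 (γ + t) = 0 := by
  have h0 : Real.Gamma (((t + 1 : ℤ):ℝ)) = 0 := gamma_int_zero _ (by omega)
  rcases hγ with h | h
  · rw [W, show γ + (t:ℝ) - γ₁ + 1 = ((t + 1 : ℤ):ℝ) by rw [h]; push_cast; ring, h0]
    simp
  · rw [W, show γ + (t:ℝ) - γ₂ + 1 = ((t + 1 : ℤ):ℝ) by rw [h]; push_cast; ring, h0]
    simp

lemma W0_vanish_hi (γ : ℝ) (hγ : γ = γ₁ ∨ γ = γ₂) (t : ℤ) (ht : (N:ℤ) - n < t) :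
    W α β γ₁ γ₂ N n 0 (γ + t) = 0 := by
  have h0 : Real.Gamma ((((N:ℤ) - n - t + 1 : ℤ):ℝ)) = 0 := gamma_int_zero _ (by omega)
  rcases hγ with h | h
  · rw [W, show (N:ℝ) - n + (0:ℕ) - (γ + t) + γ₁ + 1 = (((N:ℤ) - n - t + 1 : ℤ):ℝ) by
      rw [h]; push_cast; ring, h0]
    simp
  · rw [W, show (N:ℝ) - n + (0:ℕ) - (γ + t) + γ₂ + 1 = (((N:ℤ) - n - t + 1 : ℤ):ℝ) by
      rw [h]; push_cast; ring, h0]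
    simp


lemma orth (hα : α > max 0 (γ₂ - γ₁)) (hβN : -β - N > max 0 (γ₂ - γ₁))
    (hβ : ∀ m : ℕ, β ≠ -(m : ℝ)) (hβγ : ∀ m : ℕ, β - γ₁ + γ₂ ≠ -(m : ℝ))
    (hnN : n ≤ N) (γ : ℝ) (hγ : γ = γ₁ ∨ γ = γ₂) (k : ℕ) (hk : k < n) :
    ∑ m ∈ range (N+1), qsum α β γ₁ γ₂ N n n (γ + m) * (γ + m) ^ k * (-1:ℝ) ^ m
      * W α β γ₁ γ₂ N n n (γ + m) = 0 := by
  have step1 : ∑ m ∈ range (N+1), qsum α β γ₁ γ₂ N n n (γ + m) * (γ + m) ^ k * (-1:ℝ) ^ m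
        * W α β γ₁ γ₂ N n n (γ + m)
      = ∑ m ∈ range (N+1), ∑ l ∈ range (n+1),
          (n.choose l : ℝ) * W α β γ₁ γ₂ N n 0 (γ + m - l) * ((γ + m) ^ k * (-1:ℝ) ^ m) := by
    refine Finset.sum_congr rfl fun m _ => ?_
    have hx : γ + (m:ℝ) = γ₁ + (((m:ℤ)):ℝ) ∨ γ + (m:ℝ) = γ₂ + (((m:ℤ)):ℝ) := by
      rcases hγ with h | h
      · left; rw [h]; push_cast; ring
      · right; rw [h]; push_cast; ring
    have hr := rodrigues α β γ₁ γ₂ N n hα hβN hβ hβγ n le_rfl (m:ℤ) (γ + m) hx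
    rw [Fsum] at hr
    calc qsum α β γ₁ γ₂ N n n (γ + m) * (γ + m) ^ k * (-1:ℝ) ^ m
          * W α β γ₁ γ₂ N n n (γ + m)
        = (W α β γ₁ γ₂ N n n (γ + m) * qsum α β γ₁ γ₂ N n n (γ + m))
            * ((γ + m) ^ k * (-1:ℝ) ^ m) := by ring
      _ = (∑ l ∈ range (n+1), (n.choose l : ℝ) * W α β γ₁ γ₂ N n 0 (γ + m - l))
            * ((γ + m) ^ k * (-1:ℝ) ^ m) := by rw [← hr]
      _ = _ := by rw [Finset.sum_mul]
  rw [step1, Finset.sum_comm]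
  have step3 : ∀ l, l ∈ range (n+1) →
      ∑ m ∈ range (N+1),
          (n.choose l : ℝ) * W α β γ₁ γ₂ N n 0 (γ + m - l) * ((γ + m) ^ k * (-1:ℝ) ^ m)
      = ∑ u ∈ range ((N - n) + 1),
          (n.choose l : ℝ) * W α β γ₁ γ₂ N n 0 (γ + u) * ((γ + u + l) ^ k * (-1:ℝ) ^ (u+l)) := by
    intro l hl
    rw [Finset.mem_range] at hl
    have hwin := window
      (fun m => (n.choose l : ℝ) * W α β γ₁ γ₂ N n 0 (γ + m - l) * ((γ + m) ^ k * (-1:ℝ) ^ m))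
      N l (N - n) (by omega)
      (fun m hm => by
        have e : γ + (m:ℝ) - (l:ℝ) = γ + (((m:ℤ) - l : ℤ)):= by push_cast; ring
        rw [e, W0_vanish_lo α β γ₁ γ₂ N n γ hγ _ (by omega)]
        ring)
      (fun m hm => by
        have e : γ + (m:ℝ) - (l:ℝ) = γ + (((m:ℤ) - l : ℤ)):= by push_cast; ring
        rw [e, W0_vanish_hi α β γ₁ γ₂ N n γ hγ _ (by omega)]
        ring)
    rw [hwin]
    refine Finset.sum_congr rfl fun u _ => ?_
    have e : γ + ((u + l : ℕ):ℝ) - (l:ℝ) = γ + (u:ℝ) := by push_cast; ring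
    rw [e]
    have e2 : γ + ((u + l : ℕ):ℝ) = γ + (u:ℝ) + (l:ℝ) := by push_cast; ring
    rw [e2]
  rw [Finset.sum_congr rfl step3, Finset.sum_comm]
  refine Finset.sum_eq_zero fun u _ => ?_
  have ha := altsum n (X ^ k : Polynomial ℝ)
    (fun i hi => by rw [Polynomial.coeff_X_pow, if_neg (by omega)]) (γ + u)
  simp only [Polynomial.eval_pow, Polynomial.eval_X] at ha
  calc ∑ l ∈ range (n+1),
        (n.choose l : ℝ) * W α β γ₁ γ₂ N n 0 (γ + u) * ((γ + u + l) ^ k * (-1:ℝ) ^ (u+l))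
      = (W α β γ₁ γ₂ N n 0 (γ + u) * (-1:ℝ) ^ u)
          * ∑ l ∈ range (n+1), (-1:ℝ) ^ l * (n.choose l : ℝ) * (γ + u + l) ^ k := by
        rw [Finset.mul_sum]
        refine Finset.sum_congr rfl fun l _ => ?_
        rw [pow_add]
        ring
    _ = 0 := by rw [ha, mul_zero]

end Params

end Stmt13Aux


open Stmt13Aux Polynomial Finset in


/-- The paper's Kravchuk–Hahn I family under condition (a) with `N₁ = N₂ = N` and
Condition MD2: the polynomial `Q` (equal to `(α)_n(β)_n` times the Rodrigues polynomial)
collapses to degree exactly `2n`, and it is orthogonal to `x^k`, `k < n`, with respect to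
the signed measures `(−1)^m G(γ_j + m)` on both shifted lattices. -/
theorem stmt_13 (N n : ℕ) (hN : 1 ≤ N) (hnN : n ≤ N) (α β γ₁ γ₂ : ℝ)
    (hγ0 : 0 < |γ₁ - γ₂|) (hγ1 : |γ₁ - γ₂| < 1)
    (hα : α > max 0 (γ₂ - γ₁)) (hβN : -β - N > max 0 (γ₂ - γ₁))
    (hβ : ∀ m : ℕ, β ≠ -(m : ℝ)) (hβγ : ∀ m : ℕ, β - γ₁ + γ₂ ≠ -(m : ℝ))
    (hMD2 : ∀ z : ℤ, (z = (N : ℤ) ∨ (3 - 2 * (N : ℤ) ≤ z ∧ z ≤ (N : ℤ) - 2)) →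
      α + β ≠ (z : ℝ))
    (G : ℝ → ℝ)
    (hG : ∀ x : ℝ, G x = Real.Gamma (α + x - γ₂) * Real.Gamma (β + N - x + γ₂) /
      (Real.Gamma α * Real.Gamma β * Real.Gamma (x - γ₁ + 1) *
        Real.Gamma ((N : ℝ) - x + γ₁ + 1) * Real.Gamma (x - γ₂ + 1) *
          Real.Gamma ((N : ℝ) - x + γ₂ + 1)))
    (Q : ℝ → ℝ)
    (hQ : ∀ x : ℝ, Q x = ∑ j ∈ Finset.range (n + 1),
      (n.choose j : ℝ) *
        (∏ i ∈ Finset.range j,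
          ((x - γ₁ - (i : ℝ)) * (x - γ₂ - (i : ℝ)) * (β + (N : ℝ) - x + γ₂ + (i : ℝ)))) *
        ∏ i ∈ Finset.range (n - j),
          (((N : ℝ) - x + γ₁ - (i : ℝ)) * (x - γ₂ + α + (i : ℝ)) *
            ((N : ℝ) - x + γ₂ - (i : ℝ)))) :
    (∃ p : Polynomial ℝ, p.degree = (2 * n : ℕ) ∧ ∀ x : ℝ, Q x = p.eval x) ∧
    (∀ k : ℕ, k < n →
      ∑ m ∈ Finset.range (N + 1),
        Q (γ₁ + m) * (γ₁ + m) ^ k * (-1 : ℝ) ^ m * G (γ₁ + m) = 0 ∧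
      ∑ m ∈ Finset.range (N + 1),
        Q (γ₂ + m) * (γ₂ + m) ^ k * (-1 : ℝ) ^ m * G (γ₂ + m) = 0) := by
  have hQn : ∀ x : ℝ, Q x = qsum α β γ₁ γ₂ N n n x := by
    intro x
    rw [hQ x, qsum]
    refine Finset.sum_congr rfl fun j _ => ?_
    rw [Dl, Cl]
    congr 1
    refine Finset.prod_congr rfl fun i _ => ?_
    push_cast
    ring
  have hGW : ∀ y : ℝ, G y = W α β γ₁ γ₂ N n n y := by
    intro y
    have a1 : α + (n:ℝ) - (n:ℝ) + y - γ₂ = α + y - γ₂ := by ring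
    have a2 : (N:ℝ) - n + (n:ℝ) - y + γ₁ + 1 = (N:ℝ) - y + γ₁ + 1 := by ring
    have a3 : (N:ℝ) - n + (n:ℝ) - y + γ₂ + 1 = (N:ℝ) - y + γ₂ + 1 := by ring
    rw [W, a1, a2, a3, hG y, div_eq_mul_inv]
    simp only [mul_inv]
  constructor
  · refine ⟨PP α β γ₁ γ₂ N n n, ?_, fun x => by rw [hQn x, ← PP_eval]⟩
    obtain ⟨hdeg, hco⟩ := PP_deg α β γ₁ γ₂ N n n
    have hL : Lc α β N n n ≠ 0 := by
      rcases Nat.eq_zero_or_pos n with h0 | h0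
      · subst h0; simp [Lc]
      · exact PP_lead_ne α β N n hN h0 hnN hMD2
    refine le_antisymm ?_ ?_
    · exact le_trans (Polynomial.degree_le_natDegree) (by exact_mod_cast hdeg)
    · exact Polynomial.le_degree_of_ne_zero (by rw [hco]; exact hL)
  · intro k hk
    constructor
    · have := orth α β γ₁ γ₂ N n hα hβN hβ hβγ hnN γ₁ (Or.inl rfl) k hk
      rw [← this]
      refine Finset.sum_congr rfl fun m _ => ?_
      rw [hQn, hGW]
    · have := orth α β γ₁ γ₂ N n hα hβN hβ hβγ hnN γ₂ (Or.inr rfl) k hk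
      rw [← this]
      refine Finset.sum_congr rfl fun m _ => ?_
      rw [hQn, hGW]
end
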